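/- arXiv:1811.03558 — 5 statements merged into one kernel-verified Lean document; each statement's English description precedes it below -/
import Mathlib

section
/- Shuffle product identity: let Γ : [0,1] → ℝ^N be a continuously differentiable path, let I = (i₁, …, i_k) and J = (j₁, …, j_l) be multi-indices with entries in {1, …, N}, and let R = (r₁, …, r_{k+l}) = (i₁, …, i_k, j₁, …, j_l) be their concatenation. Then S^I(Γ) · S^J(Γ) = Σ_{σ ∈ Sh(k,l)} S^{(r_{σ(1)}, …, r_{σ(k+l)})}(Γ), where the sum runs over all (k,l)-shuffles σ. -/
open MeasureTheory

noncomputable section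

/-- The simplex `Δ^k = {(t₁, …, t_k) : 0 ≤ t₁ ≤ ⋯ ≤ t_k ≤ 1}` as a subset of `ℝ^k`. -/
def simplexSet (k : ℕ) : Set (Fin k → ℝ) :=
  {t | (∀ i j : Fin k, i ≤ j → t i ≤ t j) ∧ ∀ i, 0 ≤ t i ∧ t i ≤ 1}

/-- The iterated integral (path signature term) of a path `Γ` with respect to a multi-index
`I = (i₁, …, i_k)`: the Lebesgue integral over `Δ^k` of `γ_{i₁}'(t₁) ⋯ γ_{i_k}'(t_k)`. -/
def sig {N : ℕ} (Γ : ℝ → EuclideanSpace ℝ (Fin N)) {k : ℕ} (I : Fin k → Fin N) : ℝ :=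
  ∫ t in simplexSet k, ∏ m : Fin k, deriv (fun s => Γ s (I m)) (t m)

/-- A `(k,l)`-shuffle: a permutation `σ` of `{1, …, k+l}` such that
`σ⁻¹(1) < σ⁻¹(2) < ⋯ < σ⁻¹(k)` and `σ⁻¹(k+1) < σ⁻¹(k+2) < ⋯ < σ⁻¹(k+l)`. -/
def IsShuffle (k l : ℕ) (σ : Equiv.Perm (Fin (k + l))) : Prop :=
  StrictMono (fun i : Fin k => σ.symm (Fin.castAdd l i)) ∧
  StrictMono (fun j : Fin l => σ.symm (Fin.natAdd k j))

/-! ### Auxiliary lemmas -/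

lemma aux_vol_pair {n : ℕ} {p q : Fin n} (h : p ≠ q) :
    volume {t : Fin n → ℝ | t p = t q} = 0 := by
  have hset : {t : Fin n → ℝ | t p = t q}
      = (LinearMap.ker ((LinearMap.proj p : (Fin n → ℝ) →ₗ[ℝ] ℝ) - LinearMap.proj q) : Set _) := by
    ext t
    simp [LinearMap.mem_ker, sub_eq_zero]
  rw [hset]
  apply Measure.addHaar_submodule
  intro htop
  have h1 : Pi.single p (1:ℝ)
      ∈ LinearMap.ker ((LinearMap.proj p : (Fin n → ℝ) →ₗ[ℝ] ℝ) - LinearMap.proj q) := by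
    rw [htop]; trivial
  rw [LinearMap.mem_ker] at h1
  simp only [LinearMap.sub_apply, LinearMap.proj_apply] at h1
  rw [Pi.single_eq_same, Pi.single_eq_of_ne (Ne.symm h)] at h1
  norm_num at h1

lemma aux_vol_const {n : ℕ} (p : Fin n) (c : ℝ) :
    volume {t : Fin n → ℝ | t p = c} = 0 := by
  classical
  have hset : {t : Fin n → ℝ | t p = c}
      = Set.pi Set.univ (fun q => if q = p then {c} else Set.univ) := by
    ext t
    simp only [Set.mem_setOf_eq, Set.mem_univ_pi]
    constructor
    · intro h q; by_cases hq : q = p <;> simp [hq, h]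
    · intro h; have := h p; simpa using this
  rw [hset, volume_pi_pi]
  exact Finset.prod_eq_zero (Finset.mem_univ p) (by simp)

/-- The null set of "bad" points: some two coordinates coincide, or some coordinate is `0` or
`1`. -/
def badSet (n : ℕ) : Set (Fin n → ℝ) :=
  (⋃ (p : Fin n) (q : Fin n) (_ : p ≠ q), {t | t p = t q}) ∪
  (⋃ (p : Fin n), ({t | t p = 0} ∪ {t | t p = 1}))

lemma badSet_null (n : ℕ) : volume (badSet n) = 0 := by
  apply measure_union_null
  · exact measure_iUnion_null fun p => measure_iUnion_null fun q =>
      measure_iUnion_null fun h => aux_vol_pair h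
  · exact measure_iUnion_null fun p =>
      measure_union_null (aux_vol_const p 0) (aux_vol_const p 1)

lemma not_mem_badSet {n : ℕ} {t : Fin n → ℝ} (ht : t ∉ badSet n) :
    Function.Injective t ∧ ∀ p, t p ≠ 0 ∧ t p ≠ 1 := by
  rw [badSet, Set.mem_union, not_or] at ht
  obtain ⟨h1, h2⟩ := ht
  constructor
  · intro a b hab
    by_contra hne
    exact h1 (Set.mem_iUnion.2 ⟨a, Set.mem_iUnion.2 ⟨b, Set.mem_iUnion.2 ⟨hne, hab⟩⟩⟩)
  · intro p
    constructor
    · intro h0; exact h2 (Set.mem_iUnion.2 ⟨p, Or.inl h0⟩)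
    · intro hone; exact h2 (Set.mem_iUnion.2 ⟨p, Or.inr hone⟩)

open scoped Classical in
/-- **Shuffle product identity.** For a continuously differentiable path
`Γ : [0,1] → ℝ^N`, multi-indices `I = (i₁, …, i_k)` and `J = (j₁, …, j_l)`, with concatenation
`R = (r₁, …, r_{k+l})`, one has
`S^I(Γ) · S^J(Γ) = Σ_{σ ∈ Sh(k,l)} S^{(r_{σ(1)}, …, r_{σ(k+l)})}(Γ)`. -/
theorem sig_shuffle_product {N k l : ℕ} (Γ : ℝ → EuclideanSpace ℝ (Fin N))
    (hΓ : ContDiffOn ℝ 1 Γ (Set.Icc 0 1))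
    (I : Fin k → Fin N) (J : Fin l → Fin N) :
    sig Γ I * sig Γ J =
      ∑ σ : Equiv.Perm (Fin (k + l)),
        if IsShuffle k l σ then sig Γ (fun m => Fin.append I J (σ m)) else 0 := by
  classical
  let f : Fin N → ℝ → ℝ := fun a s => deriv (fun u => Γ u a) s
  let R : Fin (k + l) → Fin N := Fin.append I J
  let g : (Fin (k + l) → ℝ) → ℝ := fun t => ∏ p, f (R p) (t p)
  -- pointwise bound on the derivatives on the open interval
  have hbound : ∀ a : Fin N, ∃ B : ℝ, 0 ≤ B ∧ ∀ s ∈ Set.Ioo (0:ℝ) 1, |f a s| ≤ B := by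
    intro a
    have hγ' : ContDiffOn ℝ 1
        (⇑(EuclideanSpace.proj a : EuclideanSpace ℝ (Fin N) →L[ℝ] ℝ) ∘ Γ) (Set.Icc 0 1) :=
      (EuclideanSpace.proj a : EuclideanSpace ℝ (Fin N) →L[ℝ] ℝ).contDiff.comp_contDiffOn hΓ
    have hγ : ContDiffOn ℝ 1 (fun u => Γ u a) (Set.Icc 0 1) := hγ'
    have hcont : ContinuousOn (derivWithin (fun u => Γ u a) (Set.Icc 0 1)) (Set.Icc 0 1) :=
      hγ.continuousOn_derivWithin (uniqueDiffOn_Icc zero_lt_one) le_rfl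
    obtain ⟨C, hC⟩ := isCompact_Icc.exists_bound_of_continuousOn hcont
    refine ⟨max C 0, le_max_right _ _, fun s hs => ?_⟩
    have h2 : derivWithin (fun u => Γ u a) (Set.Icc 0 1) s = deriv (fun u => Γ u a) s :=
      derivWithin_of_mem_nhds (Icc_mem_nhds hs.1 hs.2)
    calc |f a s| = ‖derivWithin (fun u => Γ u a) (Set.Icc 0 1) s‖ := by
          rw [h2]; rfl
      _ ≤ C := hC s (Set.Ioo_subset_Icc_self hs)
      _ ≤ max C 0 := le_max_left _ _
  choose B hB0 hB using hbound
  -- measurability and integrability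
  have hgm : Measurable g := by
    apply Finset.measurable_prod
    intro p _
    exact (measurable_deriv _).comp (measurable_pi_apply p)
  let Q : Set (Fin (k + l) → ℝ) := Set.pi Set.univ (fun _ => Set.Ioo (0:ℝ) 1)
  have hQmeas : MeasurableSet Q := MeasurableSet.univ_pi fun _ => measurableSet_Ioo
  have hQfin : volume Q ≠ ⊤ := by
    have hsub : Q ⊆ Set.pi Set.univ (fun _ : Fin (k + l) => Set.Icc (0:ℝ) 1) :=
      Set.pi_mono fun _ _ => Set.Ioo_subset_Icc_self
    have h1 : volume (Set.pi Set.univ fun _ : Fin (k + l) => Set.Icc (0:ℝ) 1) = 1 := by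
      rw [volume_pi_pi]; simp [Real.volume_Icc]
    exact ne_top_of_le_ne_top (by rw [h1]; exact ENNReal.one_ne_top) (measure_mono hsub)
  have hIntQ : IntegrableOn g Q := by
    apply Measure.integrableOn_of_bounded (M := ∏ p, B (R p)) hQfin hgm.aestronglyMeasurable
    filter_upwards [ae_restrict_mem hQmeas] with t ht
    calc ‖g t‖ = ∏ p, |f (R p) (t p)| := by
          rw [Real.norm_eq_abs, Finset.abs_prod]
      _ ≤ ∏ p, B (R p) := Finset.prod_le_prod (fun _ _ => abs_nonneg _)
          (fun p _ => hB _ _ (ht p (Set.mem_univ p)))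
  -- the permuted simplices and their open versions
  let Δ : Equiv.Perm (Fin (k + l)) → Set (Fin (k + l) → ℝ) :=
    fun σ => {u | (fun m => u (σ m)) ∈ simplexSet (k + l)}
  let Δ' : Equiv.Perm (Fin (k + l)) → Set (Fin (k + l) → ℝ) :=
    fun σ => {u | StrictMono (fun m => u (σ m)) ∧ ∀ p, u p ∈ Set.Ioo (0:ℝ) 1}
  have hΔ'Q : ∀ σ, Δ' σ ⊆ Q := fun σ u hu p _ => hu.2 p
  have hΔ'meas : ∀ σ, MeasurableSet (Δ' σ) := by
    intro σ
    have hset : Δ' σ = (⋂ (a : Fin (k + l)) (b : Fin (k + l)) (_ : a < b),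
        {u : Fin (k + l) → ℝ | u (σ a) < u (σ b)}) ∩ Q := by
      ext u
      simp only [Δ', Q, Set.mem_inter_iff, Set.mem_iInter, Set.mem_setOf_eq, Set.mem_univ_pi]
      exact ⟨fun h => ⟨fun a b hab => h.1 hab, fun p => h.2 p⟩,
        fun h => ⟨fun a b hab => h.1 a b hab, fun p => h.2 p⟩⟩
    rw [hset]
    refine MeasurableSet.inter ?_ hQmeas
    exact MeasurableSet.iInter fun a => MeasurableSet.iInter fun b =>
      MeasurableSet.iInter fun _ =>
        measurableSet_lt (measurable_pi_apply _) (measurable_pi_apply _)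
  -- Lemma B : signature of the permuted word as integral over the permuted simplex
  have hB2 : ∀ σ : Equiv.Perm (Fin (k + l)),
      sig Γ (fun m => Fin.append I J (σ m)) = ∫ u in Δ σ, g u := by
    intro σ
    let Ψ := MeasurableEquiv.piCongrLeft (fun _ : Fin (k + l) => ℝ) (σ : Fin (k + l) ≃ Fin (k + l))
    have hΨ : MeasurePreserving Ψ volume volume :=
      volume_measurePreserving_piCongrLeft _ _
    have hΨapp : ∀ (t : Fin (k + l) → ℝ) (p), Ψ t p = t (σ.symm p) := by
      intro t p; simp [Ψ, MeasurableEquiv.piCongrLeft, Equiv.piCongrLeft_apply]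
    have hpre : ⇑Ψ ⁻¹' (Δ σ) = simplexSet (k + l) := by
      ext t
      simp only [Set.mem_preimage, Δ, Set.mem_setOf_eq]
      have h1 : (fun m => Ψ t (σ m)) = t := by
        ext m; rw [hΨapp]; simp
      rw [h1]
    have hkey := hΨ.setIntegral_preimage_emb Ψ.measurableEmbedding g (Δ σ)
    rw [hpre] at hkey
    have hfun : ∀ t : Fin (k + l) → ℝ, (∏ m, f (R (σ m)) (t m)) = g (Ψ t) := by
      intro t
      have h1 := Equiv.prod_comp σ (fun p => f (R p) (t (σ.symm p)))
      simp only [Equiv.symm_apply_apply] at h1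
      calc (∏ m, f (R (σ m)) (t m)) = ∏ p, f (R p) (t (σ.symm p)) := h1
        _ = g (Ψ t) := by
            simp only [g]
            refine Finset.prod_congr rfl fun p _ => ?_
            rw [hΨapp]
    calc sig Γ (fun m => Fin.append I J (σ m))
        = ∫ t in simplexSet (k + l), g (Ψ t) := by
          show (∫ t in simplexSet (k + l), ∏ m, f (R (σ m)) (t m)) = _
          exact integral_congr_ae (Filter.Eventually.of_forall fun t => hfun t)
      _ = ∫ u in Δ σ, g u := hkey
  -- Lemma A : the product of the two signatures as an integral over the product region
  let Sprod : Set ((Fin k → ℝ) × (Fin l → ℝ)) := simplexSet k ×ˢ simplexSet l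
  let φ : (Fin (k + l) → ℝ) ≃ᵐ (Fin k → ℝ) × (Fin l → ℝ) :=
    (MeasurableEquiv.piCongrLeft (fun _ : Fin (k + l) => ℝ) finSumFinEquiv).symm.trans
      (MeasurableEquiv.sumPiEquivProdPi (fun _ => ℝ))
  have hφ : MeasurePreserving φ volume volume :=
    (volume_measurePreserving_sumPiEquivProdPi _).comp
      ((volume_measurePreserving_piCongrLeft (fun _ : Fin (k + l) => ℝ) finSumFinEquiv).symm _)
  have hφapp : ∀ t, φ t = (fun i => t (Fin.castAdd l i), fun j => t (Fin.natAdd k j)) := by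
    intro t
    have h0 : φ t = (fun i => t (finSumFinEquiv (Sum.inl i)),
        fun j => t (finSumFinEquiv (Sum.inr j))) := by
      show (MeasurableEquiv.sumPiEquivProdPi (fun _ : Fin k ⊕ Fin l => ℝ))
          ((MeasurableEquiv.piCongrLeft (fun _ : Fin (k + l) => ℝ) finSumFinEquiv).symm t) = _
      have h1 : (MeasurableEquiv.piCongrLeft (fun _ : Fin (k + l) => ℝ) finSumFinEquiv).symm t
          = fun x => t (finSumFinEquiv x) := by
        ext x; simp [MeasurableEquiv.piCongrLeft]
      rw [h1]; rfl
    rw [h0]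
    simp [finSumFinEquiv_apply_left, finSumFinEquiv_apply_right]
  have hA : sig Γ I * sig Γ J = ∫ t in ⇑φ ⁻¹' Sprod, g t := by
    have h1 : sig Γ I * sig Γ J = ∫ z in Sprod,
        (∏ m, f (I m) (z.1 m)) * (∏ m, f (J m) (z.2 m)) := by
      rw [Measure.volume_eq_prod]
      exact (setIntegral_prod_mul (fun x : Fin k → ℝ => ∏ m, f (I m) (x m))
        (fun y : Fin l → ℝ => ∏ m, f (J m) (y m)) (simplexSet k) (simplexSet l)).symm
    have h2 := hφ.setIntegral_preimage_emb φ.measurableEmbedding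
      (fun z : (Fin k → ℝ) × (Fin l → ℝ) => (∏ m, f (I m) (z.1 m)) * (∏ m, f (J m) (z.2 m))) Sprod
    have h3 : ∀ t : Fin (k + l) → ℝ,
        (∏ m, f (I m) ((φ t).1 m)) * (∏ m, f (J m) ((φ t).2 m)) = g t := by
      intro t
      rw [hφapp]
      show (∏ m, f (I m) (t (Fin.castAdd l m))) * (∏ m, f (J m) (t (Fin.natAdd k m)))
        = ∏ p, f (R p) (t p)
      rw [Fin.prod_univ_add (f := fun p : Fin (k + l) => f (R p) (t p))]
      congr 1
      · exact Finset.prod_congr rfl fun m _ => by simp [R, Fin.append_left]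
      · exact Finset.prod_congr rfl fun m _ => by simp [R, Fin.append_right]
    rw [h1, ← h2]
    exact integral_congr_ae (Filter.Eventually.of_forall fun t => (h3 t).symm) |>.symm
  -- membership description for the product region
  have hmemT : ∀ t : Fin (k + l) → ℝ, t ∈ ⇑φ ⁻¹' Sprod ↔
      ((fun i => t (Fin.castAdd l i)) ∈ simplexSet k ∧
        (fun j => t (Fin.natAdd k j)) ∈ simplexSet l) := by
    intro t
    rw [Set.mem_preimage, hφapp]
    exact Set.mem_prod
  -- the shuffles
  let sh : Finset (Equiv.Perm (Fin (k + l))) := Finset.univ.filter (IsShuffle k l)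
  -- every open permuted simplex of a shuffle lies in the product region
  have hsub : ∀ σ : Equiv.Perm (Fin (k + l)), IsShuffle k l σ → Δ' σ ⊆ ⇑φ ⁻¹' Sprod := by
    intro σ hσ u hu
    rw [hmemT]
    constructor
    · constructor
      · intro i j hij
        rcases eq_or_lt_of_le hij with rfl | hij'
        · exact le_rfl
        · have h1 : σ.symm (Fin.castAdd l i) < σ.symm (Fin.castAdd l j) := hσ.1 hij'
          have h2 := hu.1 h1
          simpa using h2.le
      · intro i; exact ⟨(hu.2 _).1.le, (hu.2 _).2.le⟩
    · constructor
      · intro i j hij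
        rcases eq_or_lt_of_le hij with rfl | hij'
        · exact le_rfl
        · have h1 : σ.symm (Fin.natAdd k i) < σ.symm (Fin.natAdd k j) := hσ.2 hij'
          have h2 := hu.1 h1
          simpa using h2.le
      · intro i; exact ⟨(hu.2 _).1.le, (hu.2 _).2.le⟩
  -- every good point of the product region lies in some shuffle's open simplex
  have hsub2 : ∀ t, t ∈ ⇑φ ⁻¹' Sprod → t ∉ badSet (k + l) →
      ∃ σ, IsShuffle k l σ ∧ t ∈ Δ' σ := by
    intro t ht htb
    obtain ⟨hinj, hne⟩ := not_mem_badSet htb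
    rw [hmemT] at ht
    obtain ⟨⟨hI1, hI2⟩, hJ1, hJ2⟩ := ht
    let σ := Tuple.sort t
    have hsm : StrictMono (fun m => t (σ m)) :=
      (Tuple.monotone_sort t).strictMono_of_injective (hinj.comp σ.injective)
    have hIoo : ∀ p, t p ∈ Set.Ioo (0:ℝ) 1 := by
      intro p
      refine Fin.addCases (motive := fun p => t p ∈ Set.Ioo (0:ℝ) 1) (fun i => ?_) (fun j => ?_) p
      · exact ⟨lt_of_le_of_ne (hI2 i).1 (Ne.symm (hne _).1), lt_of_le_of_ne (hI2 i).2 (hne _).2⟩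
      · exact ⟨lt_of_le_of_ne (hJ2 j).1 (Ne.symm (hne _).1), lt_of_le_of_ne (hJ2 j).2 (hne _).2⟩
    refine ⟨σ, ⟨?_, ?_⟩, hsm, hIoo⟩
    · intro i j hij
      have h1 : t (Fin.castAdd l i) < t (Fin.castAdd l j) := by
        refine lt_of_le_of_ne (hI1 i j hij.le) fun he => ?_
        have hval : (i : ℕ) = j := by
          have := congrArg Fin.val (hinj he); simpa using this
        exact absurd (Fin.ext hval : i = j) hij.ne
      rw [show t (Fin.castAdd l i) = t (σ (σ.symm (Fin.castAdd l i))) by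
            rw [Equiv.apply_symm_apply],
          show t (Fin.castAdd l j) = t (σ (σ.symm (Fin.castAdd l j))) by
            rw [Equiv.apply_symm_apply]] at h1
      exact hsm.lt_iff_lt.mp h1
    · intro i j hij
      have h1 : t (Fin.natAdd k i) < t (Fin.natAdd k j) := by
        refine lt_of_le_of_ne (hJ1 i j hij.le) fun he => ?_
        have hval : (Fin.natAdd k i : Fin (k + l)) = Fin.natAdd k j := hinj he
        have : (i : ℕ) = j := by
          have := congrArg Fin.val hval
          simpa using this
        exact absurd (Fin.ext this : i = j) hij.ne
      rw [show t (Fin.natAdd k i) = t (σ (σ.symm (Fin.natAdd k i))) by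
            rw [Equiv.apply_symm_apply],
          show t (Fin.natAdd k j) = t (σ (σ.symm (Fin.natAdd k j))) by
            rw [Equiv.apply_symm_apply]] at h1
      exact hsm.lt_iff_lt.mp h1
  -- pairwise disjointness of the open permuted simplices
  have hdisj : Set.Pairwise (↑sh) (Function.onFun Disjoint Δ') := by
    intro σ _ σ' _ hne
    rw [Function.onFun]
    rw [Set.disjoint_left]
    intro u hu hu'
    apply hne
    have h1 : StrictMono (fun m => u (σ m)) := hu.1
    have h2 : StrictMono (fun m => u (σ' m)) := hu'.1
    have hui : Function.Injective u := by
      intro a b hab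
      have h3 : (fun m => u (σ m)) (σ.symm a) = (fun m => u (σ m)) (σ.symm b) := by
        simpa using hab
      have := h1.injective h3
      exact σ.symm.injective this
    have hr : Set.range (fun m => u (σ m)) = Set.range (fun m => u (σ' m)) := by
      rw [show (fun m => u (σ m)) = u ∘ σ from rfl, show (fun m => u (σ' m)) = u ∘ σ' from rfl,
        σ.surjective.range_comp u, σ'.surjective.range_comp u]
    haveI : WellFoundedLT (Fin (k + l)) := inferInstance
    have heq := (StrictMono.range_inj (β := Fin (k + l)) (γ := ℝ) h1 h2).mp hr
    exact Equiv.ext fun m => hui (congrFun heq m)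
  -- a.e. equality of each permuted simplex with its open version
  have hΔae : ∀ σ : Equiv.Perm (Fin (k + l)), Δ σ =ᵐ[volume] Δ' σ := by
    intro σ
    rw [ae_eq_set]
    constructor
    · refine measure_mono_null ?_ (badSet_null (k + l))
      rintro u ⟨hu, hun⟩
      by_contra hub
      obtain ⟨hinj, hne⟩ := not_mem_badSet hub
      refine hun ⟨?_, ?_⟩
      · refine Monotone.strictMono_of_injective ?_ (hinj.comp σ.injective)
        intro a b hab; exact hu.1 a b hab
      · intro p
        have hbp := hu.2 (σ.symm p)
        simp only [Equiv.apply_symm_apply] at hbp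
        exact ⟨lt_of_le_of_ne hbp.1 (Ne.symm (hne p).1), lt_of_le_of_ne hbp.2 (hne p).2⟩
    · have hempty : Δ' σ \ Δ σ = ∅ := by
        rw [Set.diff_eq_empty]
        intro u hu
        exact ⟨fun i j hij => hu.1.monotone hij, fun i => ⟨(hu.2 _).1.le, (hu.2 _).2.le⟩⟩
      rw [hempty]; exact measure_empty
  -- a.e. equality of the product region with the union of open permuted simplices
  have hae : (⇑φ ⁻¹' Sprod : Set _) =ᵐ[volume] ⋃ σ ∈ sh, Δ' σ := by
    rw [ae_eq_set]
    constructor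
    · refine measure_mono_null ?_ (badSet_null (k + l))
      rintro t ⟨ht, htn⟩
      by_contra htb
      obtain ⟨σ, hσ, htσ⟩ := hsub2 t ht htb
      exact htn (Set.mem_biUnion (Finset.mem_filter.2 ⟨Finset.mem_univ _, hσ⟩) htσ)
    · have hempty : (⋃ σ ∈ sh, Δ' σ) \ (⇑φ ⁻¹' Sprod) = ∅ := by
        rw [Set.diff_eq_empty]
        exact Set.iUnion₂_subset fun σ hσ => hsub σ (Finset.mem_filter.1 hσ).2
      rw [hempty]; exact measure_empty
  -- final assembly
  have hsum : ∑ σ : Equiv.Perm (Fin (k + l)),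
      (if IsShuffle k l σ then sig Γ (fun m => Fin.append I J (σ m)) else 0)
      = ∑ σ ∈ sh, ∫ u in Δ' σ, g u := by
    rw [← Finset.sum_filter]
    refine Finset.sum_congr rfl fun σ _ => ?_
    rw [hB2 σ]
    exact setIntegral_congr_set (hΔae σ)
  rw [hsum, hA, setIntegral_congr_set hae]
  exact integral_biUnion_finset sh (fun σ _ => hΔ'meas σ) hdisj
    (fun σ _ => hIntQ.mono_set (hΔ'Q σ))
end
end

section
/- Chen's multiplicative identity (termwise): let Γ₁, Γ₂ : [0,1] → ℝ^N be Lipschitz paths and let I = (i₁, …, i_k) be a multi-index with entries in {1, …, N}. Then S^I(Γ₁ * Γ₂) = Σ_{j=0}^{k} S^{(i₁, …, i_j)}(Γ₁) · S^{(i_{j+1}, …, i_k)}(Γ₂), where by convention the iterated integral over the empty multi-index equals 1, and Γ₁ * Γ₂ denotes concatenation of paths. -/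
open MeasureTheory

noncomputable section

/-- Concatenation of paths: `(Γ₁*Γ₂)(t) = Γ₁(2t)` for `t ∈ [0,1/2)` and
`(Γ₁*Γ₂)(t) = Γ₁(1) − Γ₂(0) + Γ₂(2t−1)` for `t ∈ [1/2,1]`. -/
def concat {N : ℕ} (Γ₁ Γ₂ : ℝ → EuclideanSpace ℝ (Fin N)) :
    ℝ → EuclideanSpace ℝ (Fin N) :=
  fun t => if t < 1/2 then Γ₁ (2 * t) else Γ₁ 1 - Γ₂ 0 + Γ₂ (2 * t - 1)

theorem deriv_two_mul_add (g : ℝ → ℝ) (a t : ℝ) :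
    deriv (fun s => g (2 * s + a)) t = 2 * deriv g (2 * t + a) := by
  by_cases hd : DifferentiableAt ℝ g (2 * t + a)
  · have haff : HasDerivAt (fun s : ℝ => 2 * s + a) 2 t := by
      simpa using ((hasDerivAt_id t).const_mul (2:ℝ)).add_const a
    have h2 := (hd.hasDerivAt.comp t haff)
    have h3 : (fun s => g (2 * s + a)) = (g ∘ fun s => 2 * s + a) := rfl
    rw [h3, h2.deriv]; ring
  · have hnd : ¬ DifferentiableAt ℝ (fun s => g (2 * s + a)) t := by
      intro hc
      have haff : DifferentiableAt ℝ (fun y : ℝ => (y - a) / 2) (2 * t + a) := by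
        fun_prop
      have h1 : (2 * t + a - a) / 2 = t := by ring
      have hcomp := DifferentiableAt.comp (2 * t + a) (h1.symm ▸ hc) haff
      have h2 : ((fun s => g (2 * s + a)) ∘ fun y : ℝ => (y - a) / 2) = g := by
        funext y; simp only [Function.comp]; congr 1; ring
      rw [h2] at hcomp
      exact hd hcomp
    rw [deriv_zero_of_not_differentiableAt hd, deriv_zero_of_not_differentiableAt hnd]
    ring

theorem dist_coord_le {N : ℕ} (u v : EuclideanSpace ℝ (Fin N)) (i : Fin N) :
    dist (u i) (v i) ≤ dist u v := by
  rw [EuclideanSpace.dist_eq]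
  have h1 : dist (u i) (v i) = Real.sqrt (dist (u i) (v i) ^ 2) :=
    (Real.sqrt_sq dist_nonneg).symm
  rw [h1]
  apply Real.sqrt_le_sqrt
  exact Finset.single_le_sum (f := fun j => dist (u j) (v j) ^ 2)
    (fun j _ => sq_nonneg _) (Finset.mem_univ i)

theorem coord_lip {N : ℕ} {K : NNReal} {Γ : ℝ → EuclideanSpace ℝ (Fin N)}
    (h : LipschitzOnWith K Γ (Set.Icc 0 1)) (i : Fin N) :
    LipschitzOnWith K (fun s => Γ s i) (Set.Icc 0 1) := by
  rw [lipschitzOnWith_iff_dist_le_mul] at h ⊢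
  intro x hx y hy
  exact le_trans (dist_coord_le _ _ i) (h x hx y hy)

theorem deriv_bound {N : ℕ} {K : NNReal} {Γ : ℝ → EuclideanSpace ℝ (Fin N)}
    (h : LipschitzOnWith K Γ (Set.Icc 0 1)) (i : Fin N) {t : ℝ} (ht : t ∈ Set.Ioo (0:ℝ) 1) :
    |deriv (fun s => Γ s i) t| ≤ K := by
  have hlip := coord_lip h i
  have hnhds : Set.Icc (0:ℝ) 1 ∈ nhds t := Icc_mem_nhds ht.1 ht.2
  have hb := norm_fderiv_le_of_lipschitzOn ℝ hnhds hlip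
  have h1 : deriv (fun s => Γ s i) t = fderiv ℝ (fun s => Γ s i) t 1 := rfl
  rw [h1]
  calc |fderiv ℝ (fun s => Γ s i) t 1| ≤ ‖fderiv ℝ (fun s => Γ s i) t‖ * ‖(1:ℝ)‖ :=
        (fderiv ℝ (fun s => Γ s i) t).le_opNorm 1
    _ ≤ K := by simpa using hb


theorem concat_deriv_lt {N : ℕ} (Γ₁ Γ₂ : ℝ → EuclideanSpace ℝ (Fin N)) (i : Fin N)
    {t : ℝ} (ht : t < 1/2) :
    deriv (fun s => concat Γ₁ Γ₂ s i) t = 2 * deriv (fun s => Γ₁ s i) (2 * t) := by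
  have hev : (fun s => concat Γ₁ Γ₂ s i) =ᶠ[nhds t] (fun s => Γ₁ (2 * s) i) := by
    filter_upwards [Iio_mem_nhds ht] with s hs
    simp only [concat, if_pos (Set.mem_Iio.mp hs)]
  rw [hev.deriv_eq]
  have := deriv_two_mul_add (fun y => Γ₁ y i) 0 t
  simpa using this

theorem concat_deriv_gt {N : ℕ} (Γ₁ Γ₂ : ℝ → EuclideanSpace ℝ (Fin N)) (i : Fin N)
    {t : ℝ} (ht : 1/2 < t) :
    deriv (fun s => concat Γ₁ Γ₂ s i) t = 2 * deriv (fun s => Γ₂ s i) (2 * t - 1) := by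
  have hev : (fun s => concat Γ₁ Γ₂ s i)
      =ᶠ[nhds t] (fun s => (Γ₁ 1 i - Γ₂ 0 i) + Γ₂ (2 * s - 1) i) := by
    filter_upwards [Ioi_mem_nhds ht] with s hs
    have hns : ¬ s < 1/2 := not_lt.2 (le_of_lt (Set.mem_Ioi.mp hs))
    simp only [concat, if_neg hns]
    simp [PiLp.add_apply, PiLp.sub_apply]
  rw [hev.deriv_eq, deriv_const_add]
  have := deriv_two_mul_add (fun y => Γ₂ y i) (-1) t
  simp only [← sub_eq_add_neg] at this
  exact this

theorem measurableSet_mono_pi {n : ℕ} (P : Set ℝ) (hP : MeasurableSet P) :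
    MeasurableSet {t : Fin n → ℝ | (∀ a b : Fin n, a ≤ b → t a ≤ t b) ∧ ∀ a, t a ∈ P} := by
  have h1 : {t : Fin n → ℝ | (∀ a b : Fin n, a ≤ b → t a ≤ t b) ∧ ∀ a, t a ∈ P}
      = (⋂ (a : Fin n) (b : Fin n), {t : Fin n → ℝ | a ≤ b → t a ≤ t b})
        ∩ ⋂ (a : Fin n), (fun t : Fin n → ℝ => t a) ⁻¹' P := by
    ext t; simp [Set.mem_iInter]
  rw [h1]
  apply MeasurableSet.inter
  · apply MeasurableSet.iInter; intro a; apply MeasurableSet.iInter; intro b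
    by_cases hab : a ≤ b
    · simp only [hab, forall_true_left]
      exact measurableSet_le (measurable_pi_apply a) (measurable_pi_apply b)
    · simp only [hab, false_implies]
      exact MeasurableSet.univ
  · exact MeasurableSet.iInter fun a => (measurable_pi_apply a) hP

theorem simplexSet_eq (n : ℕ) :
    simplexSet n = {t : Fin n → ℝ | (∀ a b : Fin n, a ≤ b → t a ≤ t b)
      ∧ ∀ a, t a ∈ Set.Icc (0:ℝ) 1} := by
  ext t; simp [simplexSet, Set.mem_Icc]

theorem measurableSet_simplexSet (n : ℕ) : MeasurableSet (simplexSet n) := by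
  rw [simplexSet_eq]; exact measurableSet_mono_pi _ measurableSet_Icc

theorem null_coord {n : ℕ} (m : Fin n) (c : ℝ) :
    volume {t : Fin n → ℝ | t m = c} = 0 := by
  rw [volume_pi]
  exact Measure.pi_hyperplane (fun _ => (volume : Measure ℝ)) m c


theorem mem_iff_lt_card {k : ℕ} (S : Finset (Fin k))
    (hS : ∀ m m' : Fin k, m' ≤ m → m ∈ S → m' ∈ S) (m : Fin k) :
    m ∈ S ↔ (m : ℕ) < S.card := by
  constructor
  · intro hm
    have hsub : Finset.Iic m ⊆ S := fun m' hm' => hS m m' (Finset.mem_Iic.mp hm') hm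
    have := Finset.card_le_card hsub
    rw [Fin.card_Iic] at this
    omega
  · intro hm
    by_contra hns
    have hsub : S ⊆ Finset.Iio m := by
      intro m' hm'
      rw [Finset.mem_Iio]
      by_contra hge
      exact hns (hS m' m (not_lt.mp hge) hm')
    have := Finset.card_le_card hsub
    rw [Fin.card_Iio] at this
    omega

theorem card_filter_lt {k j : ℕ} (hjk : j ≤ k) :
    (Finset.univ.filter (fun m : Fin k => (m : ℕ) < j)).card = j := by
  have h : Finset.univ.filter (fun m : Fin k => (m : ℕ) < j)
      = Finset.map (Fin.castLEEmb hjk) Finset.univ := by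
    ext m
    simp only [Finset.mem_filter, Finset.mem_univ, true_and, Finset.mem_map]
    constructor
    · intro hm
      exact ⟨⟨(m : ℕ), hm⟩, by apply Fin.ext; simp⟩
    · rintro ⟨a, rfl⟩
      simp
  rw [h, Finset.card_map, Finset.card_univ, Fintype.card_fin]


theorem scale_shift (n : ℕ) (g : Fin n → ℝ → ℝ) (P : Set ℝ) (a : ℝ) :
    ∫ u : Fin n → ℝ, Set.indicator
        {u : Fin n → ℝ | (∀ p q : Fin n, p ≤ q → u p ≤ u q) ∧ ∀ m, (2 * u m + a) ∈ P}
        (fun u => ∏ m, 2 * g m (2 * u m + a)) u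
      = ∫ t : Fin n → ℝ, Set.indicator
        {t : Fin n → ℝ | (∀ p q : Fin n, p ≤ q → t p ≤ t q) ∧ ∀ m, t m ∈ P}
        (fun t => ∏ m, g m (t m)) t := by
  set S : Set (Fin n → ℝ) :=
    {t : Fin n → ℝ | (∀ p q : Fin n, p ≤ q → t p ≤ t q) ∧ ∀ m, t m ∈ P} with hS
  set H : (Fin n → ℝ) → ℝ := S.indicator (fun t => ∏ m, g m (t m)) with hH
  set c : Fin n → ℝ := fun _ => a with hc
  have key : ∀ u : Fin n → ℝ,
      Set.indicator {u : Fin n → ℝ | (∀ p q : Fin n, p ≤ q → u p ≤ u q) ∧ ∀ m, (2 * u m + a) ∈ P}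
        (fun u => ∏ m, 2 * g m (2 * u m + a)) u
      = (2:ℝ)^n * H ((2:ℝ) • u + c) := by
    intro u
    have happ : ∀ m, ((2:ℝ) • u + c) m = 2 * u m + a := by
      intro m; simp [hc, Pi.smul_apply, smul_eq_mul]
    have hmem : ((2:ℝ) • u + c) ∈ S ↔
        ((∀ p q : Fin n, p ≤ q → u p ≤ u q) ∧ ∀ m, (2 * u m + a) ∈ P) := by
      simp only [hS, Set.mem_setOf_eq, happ]
      constructor
      · rintro ⟨h1, h2⟩
        exact ⟨fun p q hpq => by nlinarith [h1 p q hpq], h2⟩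
      · rintro ⟨h1, h2⟩
        exact ⟨fun p q hpq => by nlinarith [h1 p q hpq], h2⟩
    by_cases hu : u ∈ {u : Fin n → ℝ | (∀ p q : Fin n, p ≤ q → u p ≤ u q) ∧ ∀ m, (2 * u m + a) ∈ P}
    · rw [Set.indicator_of_mem hu, hH, Set.indicator_of_mem (hmem.mpr hu)]
      rw [Finset.prod_mul_distrib]
      simp [happ, Finset.prod_const, Finset.card_univ]
    · rw [Set.indicator_of_notMem hu, hH,
        Set.indicator_of_notMem (fun hmm => hu (hmem.mp hmm))]
      ring
  simp only [key]
  rw [MeasureTheory.integral_const_mul]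
  have step1 : ∫ u : Fin n → ℝ, H ((2:ℝ) • u + c)
      = ∫ u : Fin n → ℝ, H ((2:ℝ) • u) := by
    have : ∀ u : Fin n → ℝ, H ((2:ℝ) • u + c)
        = (fun y : Fin n → ℝ => H ((2:ℝ) • y)) (u + (2:ℝ)⁻¹ • c) := by
      intro u
      simp only [smul_add, smul_smul]
      norm_num
    simp only [this]
    exact integral_add_right_eq_self (fun y : Fin n → ℝ => H ((2:ℝ) • y)) ((2:ℝ)⁻¹ • c)
  rw [step1]
  have step2 : ∫ u : Fin n → ℝ, H ((2:ℝ) • u)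
      = |((2:ℝ) ^ n)⁻¹| • ∫ t, H t := by
    have := MeasureTheory.Measure.integral_comp_smul (volume : Measure (Fin n → ℝ)) H (2:ℝ)
    rwa [Module.finrank_fin_fun] at this
  rw [step2]
  rw [abs_of_pos (by positivity), smul_eq_mul]
  rw [← mul_assoc, mul_inv_cancel₀ (by positivity), one_mul]


theorem ae_ne_coord {n : ℕ} (c : ℝ) :
    ∀ᵐ t : Fin n → ℝ, ∀ m, t m ≠ c := by
  have h : volume (⋃ m : Fin n, {t : Fin n → ℝ | t m = c}) = 0 :=
    measure_iUnion_null fun m => null_coord m c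
  filter_upwards [measure_eq_zero_iff_ae_notMem.mp h] with t ht m hm
  exact ht (Set.mem_iUnion.mpr ⟨m, hm⟩)

theorem block1 (n : ℕ) (g : Fin n → ℝ → ℝ) :
    ∫ u : Fin n → ℝ, Set.indicator
        {u : Fin n → ℝ | (∀ p q : Fin n, p ≤ q → u p ≤ u q) ∧ ∀ m, 0 ≤ u m ∧ u m < 1/2}
        (fun u => ∏ m, 2 * g m (2 * u m)) u
      = ∫ t in simplexSet n, ∏ m, g m (t m) := by
  have h := scale_shift n g (Set.Ico 0 1) 0
  have hset : {u : Fin n → ℝ | (∀ p q : Fin n, p ≤ q → u p ≤ u q)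
        ∧ ∀ m, (2 * u m + 0) ∈ Set.Ico (0:ℝ) 1}
      = {u : Fin n → ℝ | (∀ p q : Fin n, p ≤ q → u p ≤ u q) ∧ ∀ m, 0 ≤ u m ∧ u m < 1/2} := by
    ext u
    simp only [Set.mem_setOf_eq, Set.mem_Ico, add_zero, and_congr_right_iff]
    intro _
    constructor <;> intro h2 <;> intro m <;> rcases h2 m with ⟨ha, hb⟩ <;>
      constructor <;> linarith
  have hfun : (fun u : Fin n → ℝ => ∏ m, 2 * g m (2 * u m + 0))
      = fun u => ∏ m, 2 * g m (2 * u m) := by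
    funext u; congr 1; funext m; norm_num
  rw [hset, hfun] at h
  rw [h]
  have hae : (Set.indicator {t : Fin n → ℝ | (∀ p q : Fin n, p ≤ q → t p ≤ t q)
        ∧ ∀ m, t m ∈ Set.Ico (0:ℝ) 1} (fun t => ∏ m, g m (t m)))
      =ᵐ[volume] (Set.indicator (simplexSet n) (fun t => ∏ m, g m (t m))) := by
    filter_upwards [ae_ne_coord (n := n) 1] with t ht
    have : (t ∈ {t : Fin n → ℝ | (∀ p q : Fin n, p ≤ q → t p ≤ t q)
        ∧ ∀ m, t m ∈ Set.Ico (0:ℝ) 1}) ↔ t ∈ simplexSet n := by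
      simp only [Set.mem_setOf_eq, Set.mem_Ico, simplexSet]
      constructor
      · rintro ⟨h1, h2⟩
        exact ⟨h1, fun m => ⟨(h2 m).1, le_of_lt (h2 m).2⟩⟩
      · rintro ⟨h1, h2⟩
        refine ⟨h1, fun m => ⟨(h2 m).1, lt_of_le_of_ne (h2 m).2 (ht m)⟩⟩
    by_cases hmem : t ∈ simplexSet n
    · rw [Set.indicator_of_mem (this.mpr hmem), Set.indicator_of_mem hmem]
    · rw [Set.indicator_of_notMem (fun hc => hmem (this.mp hc)),
        Set.indicator_of_notMem hmem]
  rw [integral_congr_ae hae, integral_indicator (measurableSet_simplexSet n)]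

theorem block2 (n : ℕ) (g : Fin n → ℝ → ℝ) :
    ∫ v : Fin n → ℝ, Set.indicator
        {v : Fin n → ℝ | (∀ p q : Fin n, p ≤ q → v p ≤ v q) ∧ ∀ m, 1/2 ≤ v m ∧ v m ≤ 1}
        (fun v => ∏ m, 2 * g m (2 * v m - 1)) v
      = ∫ t in simplexSet n, ∏ m, g m (t m) := by
  have h := scale_shift n g (Set.Icc 0 1) (-1)
  have hset : {v : Fin n → ℝ | (∀ p q : Fin n, p ≤ q → v p ≤ v q)
        ∧ ∀ m, (2 * v m + (-1)) ∈ Set.Icc (0:ℝ) 1}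
      = {v : Fin n → ℝ | (∀ p q : Fin n, p ≤ q → v p ≤ v q)
        ∧ ∀ m, 1/2 ≤ v m ∧ v m ≤ 1} := by
    ext v
    simp only [Set.mem_setOf_eq, Set.mem_Icc, and_congr_right_iff]
    intro _
    constructor <;> intro h2 <;> intro m <;> rcases h2 m with ⟨ha, hb⟩ <;>
      exact ⟨by linarith, by linarith⟩
  have hfun : (fun v : Fin n → ℝ => ∏ m, 2 * g m (2 * v m + (-1)))
      = fun v => ∏ m, 2 * g m (2 * v m - 1) := by
    funext v
    apply Finset.prod_congr rfl
    intro m _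
    have hh : 2 * v m + (-1) = 2 * v m - 1 := by ring
    rw [hh]
  rw [hset, hfun] at h
  rw [h]
  have hset2 : {t : Fin n → ℝ | (∀ p q : Fin n, p ≤ q → t p ≤ t q)
      ∧ ∀ m, t m ∈ Set.Icc (0:ℝ) 1} = simplexSet n := by
    ext t; simp [simplexSet, Set.mem_Icc]
  rw [hset2, integral_indicator (measurableSet_simplexSet n)]


theorem measurableSet_Aset {k : ℕ} (j : Fin (k + 1)) (hS : MeasurableSet (simplexSet k)) :
    MeasurableSet {t : Fin k → ℝ | t ∈ simplexSet k ∧ ∀ m : Fin k,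
      ((m : ℕ) < (j : ℕ) → t m < 1/2) ∧ ((j : ℕ) ≤ (m : ℕ) → 1/2 ≤ t m)} := by
  have heq : {t : Fin k → ℝ | t ∈ simplexSet k ∧ ∀ m : Fin k,
      ((m : ℕ) < (j : ℕ) → t m < 1/2) ∧ ((j : ℕ) ≤ (m : ℕ) → 1/2 ≤ t m)}
    = simplexSet k ∩ ⋂ m : Fin k,
      ({t : Fin k → ℝ | (m : ℕ) < (j : ℕ) → t m < 1/2}
        ∩ {t : Fin k → ℝ | (j : ℕ) ≤ (m : ℕ) → 1/2 ≤ t m}) := by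
    ext t
    constructor
    · rintro ⟨hs, hq⟩
      exact ⟨hs, Set.mem_iInter.mpr fun m => ⟨(hq m).1, (hq m).2⟩⟩
    · rintro ⟨hs, hq⟩
      exact ⟨hs, fun m => ⟨(Set.mem_iInter.mp hq m).1, (Set.mem_iInter.mp hq m).2⟩⟩
  rw [heq]
  refine hS.inter (MeasurableSet.iInter fun m => MeasurableSet.inter ?_ ?_)
  · by_cases hm : (m : ℕ) < (j : ℕ)
    · simp only [hm, forall_true_left]
      exact measurableSet_lt (measurable_pi_apply m) measurable_const
    · simp only [hm, false_implies]
      exact MeasurableSet.univ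
  · by_cases hm : (j : ℕ) ≤ (m : ℕ)
    · simp only [hm, forall_true_left]
      exact measurableSet_le measurable_const (measurable_pi_apply m)
    · simp only [hm, false_implies]
      exact MeasurableSet.univ

theorem partition_indicator {k : ℕ} (P : (Fin k → ℝ) → ℝ) (t : Fin k → ℝ) :
    (simplexSet k).indicator P t = ∑ j : Fin (k + 1), Set.indicator
      {t : Fin k → ℝ | t ∈ simplexSet k ∧ ∀ m : Fin k,
        ((m : ℕ) < (j : ℕ) → t m < 1/2) ∧ ((j : ℕ) ≤ (m : ℕ) → 1/2 ≤ t m)} P t := by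
  classical
  by_cases ht : t ∈ simplexSet k
  · set S : Finset (Fin k) := Finset.univ.filter (fun m => t m < 1/2) with hSdef
    have hdc : ∀ m m' : Fin k, m' ≤ m → m ∈ S → m' ∈ S := by
      intro m m' hle hm
      simp only [hSdef, Finset.mem_filter, Finset.mem_univ, true_and] at hm ⊢
      exact lt_of_le_of_lt (ht.1 m' m hle) hm
    have hcard : S.card ≤ k := le_trans (Finset.card_le_univ S) (by simp)
    have hmm : ∀ m : Fin k, t m < 1/2 ↔ (m : ℕ) < S.card := by
      intro m
      rw [← mem_iff_lt_card S hdc m]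
      simp [hSdef]
    have hiff : ∀ j : Fin (k + 1),
        (t ∈ {t : Fin k → ℝ | t ∈ simplexSet k ∧ ∀ m : Fin k,
          ((m : ℕ) < (j : ℕ) → t m < 1/2) ∧ ((j : ℕ) ≤ (m : ℕ) → 1/2 ≤ t m)}
        ↔ (j : ℕ) = S.card) := by
      intro j
      constructor
      · rintro ⟨-, hhalf⟩
        have hfe : S = Finset.univ.filter (fun m : Fin k => (m : ℕ) < (j : ℕ)) := by
          ext m
          simp only [hSdef, Finset.mem_filter, Finset.mem_univ, true_and]
          constructor
          · intro hm
            by_contra hge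
            have := (hhalf m).2 (not_lt.mp hge)
            linarith
          · exact (hhalf m).1
        rw [hfe, card_filter_lt j.is_le]
      · intro hj
        refine ⟨ht, fun m => ⟨?_, ?_⟩⟩
        · intro hm
          exact (hmm m).mpr (by omega)
        · intro hm
          by_contra hlt
          have := (hmm m).mp (not_le.mp hlt)
          omega
    rw [Set.indicator_of_mem ht]
    rw [Finset.sum_eq_single_of_mem (⟨S.card, by omega⟩ : Fin (k + 1)) (Finset.mem_univ _)]
    · exact (Set.indicator_of_mem ((hiff _).mpr rfl) P).symm
    · intro j _ hj
      apply Set.indicator_of_notMem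
      intro hc
      exact hj (Fin.ext ((hiff j).mp hc))
  · rw [Set.indicator_of_notMem ht]
    symm
    apply Finset.sum_eq_zero
    intro j _
    apply Set.indicator_of_notMem
    intro hc
    exact ht hc.1

theorem piece_integrable {N k : ℕ} {Γ₁ Γ₂ : ℝ → EuclideanSpace ℝ (Fin N)} {K₁ K₂ : NNReal}
    (hK₁ : LipschitzOnWith K₁ Γ₁ (Set.Icc 0 1)) (hK₂ : LipschitzOnWith K₂ Γ₂ (Set.Icc 0 1))
    (I : Fin k → Fin N) (A : Set (Fin k → ℝ)) (hA : MeasurableSet A)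
    (hsub : A ⊆ simplexSet k) :
    Integrable (A.indicator (fun t => ∏ m, deriv (fun s => concat Γ₁ Γ₂ s (I m)) (t m))) := by
  set C : ℝ := 2 * (K₁ : ℝ) + 2 * (K₂ : ℝ) + 1 with hC
  have hCnn : (0:ℝ) ≤ C := by positivity
  set box : Set (Fin k → ℝ) := Set.pi Set.univ (fun _ => Set.Icc (0:ℝ) 1) with hbox
  have hboxm : MeasurableSet box := MeasurableSet.univ_pi fun _ => measurableSet_Icc
  have hboxfin : volume box ≠ ⊤ :=
    ((isCompact_univ_pi fun _ => isCompact_Icc).measure_lt_top).ne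
  have hintbox : Integrable (box.indicator (fun _ => C ^ k)) := by
    rw [integrable_indicator_iff hboxm]
    exact (integrableOn_const_iff).mpr (Or.inr (lt_top_iff_ne_top.mpr hboxfin))
  apply Integrable.mono' hintbox
  · apply Measurable.aestronglyMeasurable
    apply Measurable.indicator _ hA
    apply Finset.measurable_prod
    intro m _
    exact (measurable_deriv _).comp (measurable_pi_apply m)
  · filter_upwards [ae_ne_coord (n := k) 0, ae_ne_coord (n := k) (1/2),
      ae_ne_coord (n := k) 1] with t h0 hh h1
    by_cases hmem : t ∈ A
    · rw [Set.indicator_of_mem hmem]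
      have hsim := hsub hmem
      have hboxmem : t ∈ box := by
        intro m _
        exact Set.mem_Icc.mpr ⟨(hsim.2 m).1, (hsim.2 m).2⟩
      rw [Set.indicator_of_mem hboxmem, Real.norm_eq_abs, Finset.abs_prod]
      have hfac : ∀ m : Fin k, |deriv (fun s => concat Γ₁ Γ₂ s (I m)) (t m)| ≤ C := by
        intro m
        have hb0 : 0 ≤ t m := (hsim.2 m).1
        have hb1 : t m ≤ 1 := (hsim.2 m).2
        rcases lt_or_gt_of_ne (hh m) with hlt | hgt
        · rw [concat_deriv_lt Γ₁ Γ₂ (I m) hlt, abs_mul, abs_two]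
          have hio : 2 * t m ∈ Set.Ioo (0:ℝ) 1 := by
            constructor
            · have := lt_of_le_of_ne hb0 (Ne.symm (h0 m))
              linarith
            · linarith
          have := deriv_bound hK₁ (I m) hio
          rw [hC]
          have hK2nn : (0:ℝ) ≤ (K₂ : ℝ) := K₂.coe_nonneg
          linarith
        · rw [concat_deriv_gt Γ₁ Γ₂ (I m) hgt, abs_mul, abs_two]
          have hio : 2 * t m - 1 ∈ Set.Ioo (0:ℝ) 1 := by
            constructor
            · linarith
            · have := lt_of_le_of_ne hb1 (h1 m)
              linarith
          have := deriv_bound hK₂ (I m) hio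
          rw [hC]
          have hK1nn : (0:ℝ) ≤ (K₁ : ℝ) := K₁.coe_nonneg
          linarith
      calc (∏ m : Fin k, |deriv (fun s => concat Γ₁ Γ₂ s (I m)) (t m)|)
          ≤ ∏ _m : Fin k, C :=
            Finset.prod_le_prod (fun m _ => abs_nonneg _) (fun m _ => hfac m)
        _ = C ^ k := by rw [Finset.prod_const, Finset.card_univ, Fintype.card_fin]
    · rw [Set.indicator_of_notMem hmem]
      simp only [norm_zero]
      exact Set.indicator_nonneg (fun _ _ => pow_nonneg hCnn k) t


theorem piece_eval {N k : ℕ} (Γ₁ Γ₂ : ℝ → EuclideanSpace ℝ (Fin N)) (I : Fin k → Fin N)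
    (j : Fin (k + 1)) :
    ∫ t : Fin k → ℝ, Set.indicator
        {t : Fin k → ℝ | t ∈ simplexSet k ∧ ∀ m : Fin k,
          ((m : ℕ) < (j : ℕ) → t m < 1/2) ∧ ((j : ℕ) ≤ (m : ℕ) → 1/2 ≤ t m)}
        (fun t => ∏ m, deriv (fun s => concat Γ₁ Γ₂ s (I m)) (t m)) t
      = (sig Γ₁ fun m : Fin j.val => I (Fin.castLE j.is_le m)) *
        (sig Γ₂ fun m : Fin (k - j.val) =>
          I (Fin.cast (Nat.add_sub_cancel' j.is_le) (Fin.natAdd j.val m))) := by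
  have hjk : (j : ℕ) ≤ k := j.is_le
  have hkeq : k = (j : ℕ) + (k - (j : ℕ)) := by omega
  set Aset : Set (Fin k → ℝ) :=
    {t : Fin k → ℝ | t ∈ simplexSet k ∧ ∀ m : Fin k,
      ((m : ℕ) < (j : ℕ) → t m < 1/2) ∧ ((j : ℕ) ≤ (m : ℕ) → 1/2 ≤ t m)} with hAset
  set R : (Fin k → ℝ) → ℝ := fun t => ∏ m : Fin k,
    (if (m : ℕ) < (j : ℕ) then 2 * deriv (fun s => Γ₁ s (I m)) (2 * t m)
      else 2 * deriv (fun s => Γ₂ s (I m)) (2 * t m - 1)) with hR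
  -- Step a: replace the concat derivative by the scaled derivatives, a.e.
  have ha : (Set.indicator Aset
        (fun t => ∏ m, deriv (fun s => concat Γ₁ Γ₂ s (I m)) (t m)))
      =ᵐ[volume] Set.indicator Aset R := by
    filter_upwards [ae_ne_coord (n := k) (1/2)] with t ht
    by_cases hmem : t ∈ Aset
    · rw [Set.indicator_of_mem hmem, Set.indicator_of_mem hmem, hR]
      apply Finset.prod_congr rfl
      intro m _
      by_cases hm : (m : ℕ) < (j : ℕ)
      · rw [if_pos hm]
        exact concat_deriv_lt Γ₁ Γ₂ (I m) ((hmem.2 m).1 hm)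
      · rw [if_neg hm]
        have h2 : 1/2 ≤ t m := (hmem.2 m).2 (not_lt.mp hm)
        exact concat_deriv_gt Γ₁ Γ₂ (I m) (lt_of_le_of_ne h2 (Ne.symm (ht m)))
    · rw [Set.indicator_of_notMem hmem, Set.indicator_of_notMem hmem]
  rw [integral_congr_ae ha]
  -- Step b: transfer to the product space.
  set e : Fin (j : ℕ) ⊕ Fin (k - (j : ℕ)) ≃ Fin k :=
    finSumFinEquiv.trans (finCongr hkeq.symm) with he
  set Φ : ((Fin (j : ℕ) → ℝ) × (Fin (k - (j : ℕ)) → ℝ)) ≃ᵐ (Fin k → ℝ) :=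
    (MeasurableEquiv.sumPiEquivProdPi (fun _ : Fin (j : ℕ) ⊕ Fin (k - (j : ℕ)) => ℝ)).symm.trans
      (MeasurableEquiv.piCongrLeft (π := fun _ : Fin k => ℝ) e) with hΦ
  have hmp : MeasurePreserving Φ volume volume := by
    have h1 := volume_measurePreserving_sumPiEquivProdPi_symm
      (fun _ : Fin (j : ℕ) ⊕ Fin (k - (j : ℕ)) => ℝ)
    have h2 := volume_measurePreserving_piCongrLeft (fun _ : Fin k => ℝ) e
    exact h2.comp h1
  rw [← hmp.integral_comp' (Set.indicator Aset R)]
  -- application formulas for Φ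
  have happl : ∀ (u : Fin (j:ℕ) → ℝ) (v : Fin (k - (j:ℕ)) → ℝ) (a : Fin (j:ℕ)),
      Φ (u, v) (e (Sum.inl a)) = u a := by
    intro u v a
    exact Equiv.piCongrLeft_sumInl (fun _ : Fin k => ℝ) e u v a
  have happr : ∀ (u : Fin (j:ℕ) → ℝ) (v : Fin (k - (j:ℕ)) → ℝ) (b : Fin (k - (j:ℕ))),
      Φ (u, v) (e (Sum.inr b)) = v b := by
    intro u v b
    exact Equiv.piCongrLeft_sumInr (fun _ : Fin k => ℝ) e u v b
  have hval₁ : ∀ a : Fin (j:ℕ), ((e (Sum.inl a)) : ℕ) = (a : ℕ) := by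
    intro a; simp [he]
  have hval₂ : ∀ b : Fin (k - (j:ℕ)), ((e (Sum.inr b)) : ℕ) = (j : ℕ) + (b : ℕ) := by
    intro b; simp [he]
  have hΦ₁ : ∀ (u : Fin (j:ℕ) → ℝ) (v : Fin (k - (j:ℕ)) → ℝ) (m : Fin k)
      (hm : (m : ℕ) < (j : ℕ)), Φ (u, v) m = u ⟨(m : ℕ), hm⟩ := by
    intro u v m hm
    have hme : m = e (Sum.inl ⟨(m : ℕ), hm⟩) := by
      apply Fin.ext; rw [hval₁]
    have h := happl u v ⟨(m : ℕ), hm⟩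
    rw [← hme] at h
    exact h
  have hΦ₂ : ∀ (u : Fin (j:ℕ) → ℝ) (v : Fin (k - (j:ℕ)) → ℝ) (m : Fin k)
      (hm : (j : ℕ) ≤ (m : ℕ)), Φ (u, v) m
        = v ⟨(m : ℕ) - (j : ℕ), by have := m.isLt; omega⟩ := by
    intro u v m hm
    have hme : m = e (Sum.inr ⟨(m : ℕ) - (j : ℕ), by have := m.isLt; omega⟩) := by
      apply Fin.ext
      rw [hval₂]
      show (m : ℕ) = (j : ℕ) + ((m : ℕ) - (j : ℕ))
      omega
    conv_lhs => rw [hme]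
    exact happr u v _
  set B₁ : Set (Fin (j:ℕ) → ℝ) :=
    {u | (∀ p q : Fin (j:ℕ), p ≤ q → u p ≤ u q) ∧ ∀ m, 0 ≤ u m ∧ u m < 1/2} with hB₁
  set B₂ : Set (Fin (k - (j:ℕ)) → ℝ) :=
    {v | (∀ p q : Fin (k - (j:ℕ)), p ≤ q → v p ≤ v q) ∧ ∀ m, 1/2 ≤ v m ∧ v m ≤ 1} with hB₂
  set F : (Fin (j:ℕ) → ℝ) → ℝ := fun u => ∏ a : Fin (j:ℕ),
    2 * deriv (fun s => Γ₁ s (I ⟨(a : ℕ), by have := a.isLt; omega⟩)) (2 * u a) with hF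
  set G : (Fin (k - (j:ℕ)) → ℝ) → ℝ := fun v => ∏ b : Fin (k - (j:ℕ)),
    2 * deriv (fun s => Γ₂ s (I ⟨(j : ℕ) + (b : ℕ), by have := b.isLt; omega⟩))
      (2 * v b - 1) with hG
  -- pointwise identification
  have hpoint : ∀ p : (Fin (j:ℕ) → ℝ) × (Fin (k - (j:ℕ)) → ℝ),
      Set.indicator Aset R (Φ p) = Set.indicator B₁ F p.1 * Set.indicator B₂ G p.2 := by
    rintro ⟨u, v⟩
    have hmem : Φ (u, v) ∈ Aset ↔ (u ∈ B₁ ∧ v ∈ B₂) := by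
      constructor
      · rintro ⟨⟨hmono, hbnd⟩, hhalf⟩
        refine ⟨⟨?_, ?_⟩, ?_, ?_⟩
        · intro p q hpq
          have h1 := hΦ₁ u v ⟨(p : ℕ), by have := p.isLt; omega⟩ (by simpa using p.isLt)
          have h2 := hΦ₁ u v ⟨(q : ℕ), by have := q.isLt; omega⟩ (by simpa using q.isLt)
          have h3 := hmono ⟨(p : ℕ), by have := p.isLt; omega⟩
            ⟨(q : ℕ), by have := q.isLt; omega⟩
            (by rw [Fin.mk_le_mk]; exact Fin.le_def.mp hpq)
          rw [h1, h2] at h3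
          simpa using h3
        · intro m
          have h1 := hΦ₁ u v ⟨(m : ℕ), by have := m.isLt; omega⟩ (by simpa using m.isLt)
          have h2 := hbnd ⟨(m : ℕ), by have := m.isLt; omega⟩
          have h3 := (hhalf ⟨(m : ℕ), by have := m.isLt; omega⟩).1 (by simpa using m.isLt)
          rw [h1] at h2 h3
          simp only [Fin.eta] at h2 h3
          exact ⟨h2.1, h3⟩
        · intro p q hpq
          have h1 := hΦ₂ u v ⟨(j : ℕ) + (p : ℕ), by have := p.isLt; omega⟩ (by simp)
          have h2 := hΦ₂ u v ⟨(j : ℕ) + (q : ℕ), by have := q.isLt; omega⟩ (by simp)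
          have h3 := hmono ⟨(j : ℕ) + (p : ℕ), by have := p.isLt; omega⟩
            ⟨(j : ℕ) + (q : ℕ), by have := q.isLt; omega⟩
            (by simp only [Fin.mk_le_mk]; have := Fin.le_def.mp hpq; omega)
          rw [h1, h2] at h3
          have hp : (⟨(j:ℕ) + (p:ℕ) - (j:ℕ), by have := p.isLt; omega⟩
              : Fin (k - (j:ℕ))) = p := by apply Fin.ext; simp
          have hq : (⟨(j:ℕ) + (q:ℕ) - (j:ℕ), by have := q.isLt; omega⟩
              : Fin (k - (j:ℕ))) = q := by apply Fin.ext; simp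
          rwa [hp, hq] at h3
        · intro m
          have h1 := hΦ₂ u v ⟨(j : ℕ) + (m : ℕ), by have := m.isLt; omega⟩ (by simp)
          have h2 := hbnd ⟨(j : ℕ) + (m : ℕ), by have := m.isLt; omega⟩
          have h3 := (hhalf ⟨(j : ℕ) + (m : ℕ), by have := m.isLt; omega⟩).2 (by simp)
          rw [h1] at h2 h3
          have hm : (⟨(j:ℕ) + (m:ℕ) - (j:ℕ), by have := m.isLt; omega⟩
              : Fin (k - (j:ℕ))) = m := by apply Fin.ext; simp
          rw [hm] at h2 h3
          exact ⟨h3, h2.2⟩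
      · rintro ⟨⟨humono, hubnd⟩, hvmono, hvbnd⟩
        refine ⟨⟨?_, ?_⟩, ?_⟩
        · intro p q hpq
          by_cases hp : (p : ℕ) < (j : ℕ)
          · by_cases hq : (q : ℕ) < (j : ℕ)
            · rw [hΦ₁ u v p hp, hΦ₁ u v q hq]
              exact humono _ _ (by simp only [Fin.mk_le_mk]; exact Fin.le_def.mp hpq)
            · rw [hΦ₁ u v p hp, hΦ₂ u v q (not_lt.mp hq)]
              exact le_trans (le_of_lt (hubnd _).2) (hvbnd _).1
          · have hq : ¬ (q : ℕ) < (j : ℕ) := by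
              have := Fin.le_def.mp hpq; omega
            rw [hΦ₂ u v p (not_lt.mp hp), hΦ₂ u v q (not_lt.mp hq)]
            refine hvmono _ _ ?_
            rw [Fin.mk_le_mk]
            have := Fin.le_def.mp hpq
            omega
        · intro m
          by_cases hm : (m : ℕ) < (j : ℕ)
          · rw [hΦ₁ u v m hm]
            rcases hubnd ⟨(m : ℕ), hm⟩ with ⟨ha, hb⟩
            constructor <;> linarith
          · rw [hΦ₂ u v m (not_lt.mp hm)]
            rcases hvbnd ⟨(m : ℕ) - (j : ℕ), by have := m.isLt; omega⟩ with ⟨ha, hb⟩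
            constructor <;> linarith
        · intro m
          constructor
          · intro hm
            rw [hΦ₁ u v m hm]
            exact (hubnd _).2
          · intro hm
            rw [hΦ₂ u v m hm]
            exact (hvbnd _).1
    by_cases hc : u ∈ B₁ ∧ v ∈ B₂
    · rw [Set.indicator_of_mem (hmem.mpr hc), Set.indicator_of_mem hc.1,
        Set.indicator_of_mem hc.2]
      simp only [hR]
      rw [← Equiv.prod_comp e (fun m : Fin k =>
        if (m : ℕ) < (j : ℕ) then 2 * deriv (fun s => Γ₁ s (I m)) (2 * Φ (u, v) m)
          else 2 * deriv (fun s => Γ₂ s (I m)) (2 * Φ (u, v) m - 1)), Fintype.prod_sum_type]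
      congr 1
      · rw [hF]
        apply Finset.prod_congr rfl
        intro a _
        have h1 : ((e (Sum.inl a)) : ℕ) < (j : ℕ) := by rw [hval₁]; exact a.isLt
        rw [if_pos h1, happl]
        have h2 : e (Sum.inl a) = ⟨(a : ℕ), by have := a.isLt; omega⟩ := by
          apply Fin.ext; rw [hval₁]
        rw [h2]
      · rw [hG]
        apply Finset.prod_congr rfl
        intro b _
        have h1 : ¬ ((e (Sum.inr b)) : ℕ) < (j : ℕ) := by rw [hval₂]; omega
        rw [if_neg h1, happr]
        have h2 : e (Sum.inr b) = ⟨(j : ℕ) + (b : ℕ), by have := b.isLt; omega⟩ := by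
          apply Fin.ext; rw [hval₂]
        rw [h2]
    · rw [Set.indicator_of_notMem (fun hx => hc (hmem.mp hx))]
      rcases not_and_or.mp hc with h | h
      · rw [Set.indicator_of_notMem h, zero_mul]
      · rw [Set.indicator_of_notMem h, mul_zero]
  calc ∫ p : (Fin (j:ℕ) → ℝ) × (Fin (k - (j:ℕ)) → ℝ), Set.indicator Aset R (Φ p)
      = ∫ p : (Fin (j:ℕ) → ℝ) × (Fin (k - (j:ℕ)) → ℝ),
          Set.indicator B₁ F p.1 * Set.indicator B₂ G p.2 := by
        apply integral_congr_ae
        exact Filter.Eventually.of_forall hpoint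
    _ = (∫ u, Set.indicator B₁ F u) * (∫ v, Set.indicator B₂ G v) := by
        rw [MeasureTheory.Measure.volume_eq_prod, integral_prod_mul]
    _ = _ := by
        rw [hB₁, hB₂, hF, hG]
        rw [block1 ((j:ℕ)) (fun a y => deriv (fun s => Γ₁ s
            (I ⟨(a : ℕ), by have := a.isLt; omega⟩)) y),
          block2 ((k - (j:ℕ))) (fun b y => deriv (fun s => Γ₂ s
            (I ⟨(j : ℕ) + (b : ℕ), by have := b.isLt; omega⟩)) y)]
        rfl


/-- **Chen's multiplicative identity, termwise.** For Lipschitz paths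
`Γ₁, Γ₂ : [0,1] → ℝ^N` and a multi-index `I = (i₁, …, i_k)`,
`S^I(Γ₁ * Γ₂) = Σ_{j=0}^{k} S^{(i₁, …, i_j)}(Γ₁) · S^{(i_{j+1}, …, i_k)}(Γ₂)`,
where the iterated integral over the empty multi-index equals `1`. -/
theorem chen_identity_termwise {N k : ℕ} (Γ₁ Γ₂ : ℝ → EuclideanSpace ℝ (Fin N))
    (h₁ : ∃ K : NNReal, LipschitzOnWith K Γ₁ (Set.Icc 0 1))
    (h₂ : ∃ K : NNReal, LipschitzOnWith K Γ₂ (Set.Icc 0 1))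
    (I : Fin k → Fin N) :
    sig (concat Γ₁ Γ₂) I =
      ∑ j : Fin (k + 1),
        sig Γ₁ (fun m : Fin j.val => I ⟨m.val, by have := m.isLt; have := j.is_le; omega⟩) *
        sig Γ₂ (fun m : Fin (k - j.val) =>
          I ⟨j.val + m.val, by have := m.isLt; have := j.is_le; omega⟩) := by
  obtain ⟨K₁, hK₁⟩ := h₁
  obtain ⟨K₂, hK₂⟩ := h₂
  have h0 : sig (concat Γ₁ Γ₂) I
      = ∫ t : Fin k → ℝ, (simplexSet k).indicator
          (fun t => ∏ m, deriv (fun s => concat Γ₁ Γ₂ s (I m)) (t m)) t := by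
    unfold sig
    exact (integral_indicator (measurableSet_simplexSet k)).symm
  rw [h0]
  simp only [partition_indicator]
  rw [integral_finset_sum Finset.univ (fun j _ => piece_integrable hK₁ hK₂ I _
    (measurableSet_Aset j (measurableSet_simplexSet k)) (fun t ht => ht.1))]
  exact Finset.sum_congr rfl fun j _ => piece_eval Γ₁ Γ₂ I j
end
end

section
/- Local Lipschitz continuity of the signature: for every k ≥ 1 there exists a constant C_k > 0 such that for all N ≥ 1, all L > 0, and all Lipschitz paths Γ₁, Γ₂ : [0,1] → ℝ^N whose 1-variations satisfy |Γ₁|₁ ≤ L and |Γ₂|₁ ≤ L, one has ( Σ_{I} (S^I(Γ₁) − S^I(Γ₂))² )^{1/2} ≤ C_k · L^{k−1} · |Γ₁ − Γ₂|₁, where the sum runs over all multi-indices I of length k with entries in {1, …, N}. -/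
open MeasureTheory

noncomputable section

/-- The 1-variation of a path `Γ : [0,1] → ℝ^N`: the supremum over finite partitions
`0 = t₀ < t₁ < ⋯ < t_n = 1` of `Σᵢ ‖Γ(tᵢ) − Γ(tᵢ₋₁)‖`, with the Euclidean norm on `ℝ^N`.
Here it is expressed via Mathlib's `eVariationOn` (valued in `ℝ≥0∞`). -/
def oneVariation {N : ℕ} (Γ : ℝ → EuclideanSpace ℝ (Fin N)) : ENNReal :=
  eVariationOn Γ (Set.Icc 0 1)

open Set Filter Topology

namespace SigAux

/-- clamp to [0,1] -/
def cl (s : ℝ) : ℝ := max 0 (min 1 s)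

lemma cl_mem (s : ℝ) : cl s ∈ Icc (0:ℝ) 1 :=
  ⟨le_max_left _ _, max_le (by norm_num) (min_le_left _ _)⟩

lemma cl_eq {s : ℝ} (h : s ∈ Icc (0:ℝ) 1) : cl s = s := by
  simp only [cl, min_eq_right h.2, max_eq_right h.1]

lemma cl_mono : Monotone cl := fun x y h =>
  max_le_max le_rfl (min_le_min le_rfl h)

lemma cl_lip : LipschitzWith 1 cl :=
  (LipschitzWith.const_max (LipschitzWith.const_min LipschitzWith.id 1) 0)

lemma cl_one {t : ℝ} (h : 1 ≤ t) : cl t = 1 := by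
  simp only [cl, min_eq_left h, max_eq_right (by norm_num : (0:ℝ) ≤ 1)]

lemma lip_comp_cl {E : Type*} [PseudoEMetricSpace E] {K : NNReal} {Γ : ℝ → E}
    (h : LipschitzOnWith K Γ (Icc 0 1)) : LipschitzWith K (Γ ∘ cl) := fun x y => by
  calc edist (Γ (cl x)) (Γ (cl y)) ≤ K * edist (cl x) (cl y) := h (cl_mem x) (cl_mem y)
    _ ≤ K * (1 * edist x y) := by gcongr; exact cl_lip x y
    _ = K * edist x y := by rw [one_mul]


variable {N : ℕ}

/-- pointwise "norm of derivative" via coordinates -/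
def phi (Γ : ℝ → EuclideanSpace ℝ (Fin N)) (t : ℝ) : ℝ :=
  Real.sqrt (∑ i, (deriv (fun s => Γ s i) t) ^ 2)

lemma phi_nonneg (Γ : ℝ → EuclideanSpace ℝ (Fin N)) (t : ℝ) : 0 ≤ phi Γ t :=
  Real.sqrt_nonneg _

lemma measurable_phi (Γ : ℝ → EuclideanSpace ℝ (Fin N)) : Measurable (phi Γ) := by
  apply Real.continuous_sqrt.measurable.comp
  exact Finset.measurable_sum _ fun i _ => ((measurable_deriv _).pow_const 2)

lemma deriv_coord_eq {Γ : ℝ → EuclideanSpace ℝ (Fin N)} {t : ℝ} (ht : t ∈ Ioo (0:ℝ) 1)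
    (i : Fin N) :
    deriv (fun s => Γ s i) t = deriv (fun s => (Γ ∘ cl) s i) t := by
  apply Filter.EventuallyEq.deriv_eq
  filter_upwards [Ioo_mem_nhds ht.1 ht.2] with s hs
  simp [Function.comp, cl_eq (Ioo_subset_Icc_self hs)]

lemma deriv_coord_clamped {Γ : ℝ → EuclideanSpace ℝ (Fin N)} {t : ℝ}
    (hd : DifferentiableAt ℝ (Γ ∘ cl) t) (i : Fin N) :
    deriv (fun s => (Γ ∘ cl) s i) t = (deriv (Γ ∘ cl) t) i := by
  have h1 : HasDerivAt (Γ ∘ cl) (deriv (Γ ∘ cl) t) t := hd.hasDerivAt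
  have h2 : HasDerivAt (fun s => (Γ ∘ cl) s i) ((deriv (Γ ∘ cl) t) i) t := by
    have := (EuclideanSpace.proj (𝕜 := ℝ) i).hasFDerivAt.comp_hasDerivAt t h1
    exact this
  exact h2.deriv

lemma phi_eq_norm_deriv {Γ : ℝ → EuclideanSpace ℝ (Fin N)} {t : ℝ} (ht : t ∈ Ioo (0:ℝ) 1)
    (hd : DifferentiableAt ℝ (Γ ∘ cl) t) :
    phi Γ t = ‖deriv (Γ ∘ cl) t‖ := by
  rw [EuclideanSpace.norm_eq]
  unfold phi
  congr 1
  refine Finset.sum_congr rfl fun i _ => ?_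
  rw [deriv_coord_eq ht i, deriv_coord_clamped hd i, Real.norm_eq_abs, sq_abs]

theorem integral_phi_le {N : ℕ} {K : NNReal} {Γ : ℝ → EuclideanSpace ℝ (Fin N)}
    (hΓ : LipschitzOnWith K Γ (Icc 0 1)) :
    ∫ t in Icc (0:ℝ) 1, phi Γ t ≤ (eVariationOn Γ (Icc 0 1)).toReal := by
  have hloc : LocallyBoundedVariationOn Γ (Icc 0 1) := hΓ.locallyBoundedVariationOn
  have hfin : eVariationOn Γ (Icc 0 1) ≠ ⊤ := by
    have := hloc 0 1 (by simp) (by simp)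
    simpa [BoundedVariationOn, Set.inter_self] using this
  set Γc : ℝ → EuclideanSpace ℝ (Fin N) := Γ ∘ cl with hΓc
  have hLc : LipschitzWith K Γc := lip_comp_cl hΓ
  set V : ℝ → ℝ := fun t => variationOnFromTo Γ (Icc 0 1) 0 (cl t) with hV
  have h0m : (0:ℝ) ∈ Icc (0:ℝ) 1 := by simp
  have hVmono : Monotone V := fun x y h =>
    variationOnFromTo.monotoneOn hloc h0m (cl_mem x) (cl_mem y) (cl_mono h)
  have hV0 : ∀ t, 0 ≤ V t := fun t => variationOnFromTo.nonneg_of_le _ _ (cl_mem t).1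
  have hV1 : V 1 = (eVariationOn Γ (Icc 0 1)).toReal := by
    have : cl 1 = 1 := cl_eq (by simp)
    rw [hV]; simp only [this]
    rw [variationOnFromTo.eq_of_le _ _ (by norm_num : (0:ℝ) ≤ 1), Set.inter_self]
  have hV1' : ∀ t, 1 ≤ t → V t = V 1 := by
    intro t ht
    have h1 : cl (1:ℝ) = 1 := cl_eq (by simp)
    simp only [hV, cl_one ht, h1]
  have hdist : ∀ x y : ℝ, x ≤ y → ‖Γc y - Γc x‖ ≤ V y - V x := by
    intro x y hxy
    have hab : cl x ≤ cl y := cl_mono hxy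
    have hadd := variationOnFromTo.add hloc h0m (cl_mem x) (cl_mem y)
    have h1 : variationOnFromTo Γ (Icc 0 1) (cl x) (cl y) = V y - V x := by
      rw [hV]; dsimp only; linarith
    have h2 : ‖Γc y - Γc x‖ ≤ variationOnFromTo Γ (Icc 0 1) (cl x) (cl y) := by
      rw [variationOnFromTo.eq_of_le _ _ hab]
      rw [← dist_eq_norm, dist_comm, dist_edist]
      apply ENNReal.toReal_mono
      · exact fun h => hfin (top_le_iff.1 (h ▸ eVariationOn.mono Γ Set.inter_subset_left))
      · exact eVariationOn.edist_le Γ ⟨cl_mem x, le_refl _, hab⟩ ⟨cl_mem y, hab, le_refl _⟩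
    linarith
  -- sequence of difference quotients
  set q : ℕ → ℝ → ℝ := fun n t => ((n:ℝ)+1) * ‖Γc (t + ((n:ℝ)+1)⁻¹) - Γc t‖ with hq
  have hqmeas : ∀ n, Measurable (q n) := by
    intro n
    apply Measurable.const_mul
    exact ((hLc.continuous.comp (continuous_id.add continuous_const)).sub
      hLc.continuous).norm.measurable
  -- pointwise convergence a.e.
  have hae : ∀ᵐ t ∂(volume.restrict (Icc (0:ℝ) 1)),
      ENNReal.ofReal (phi Γ t) ≤ liminf (fun n => ENNReal.ofReal (q n t)) atTop := by
    have hrad : ∀ᵐ t ∂(volume : Measure ℝ), DifferentiableAt ℝ Γc t :=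
      hLc.ae_differentiableAt
    have hne : ∀ᵐ t ∂(volume : Measure ℝ), t ≠ 0 ∧ t ≠ 1 := by
      have h01 : (volume : Measure ℝ) ({0,1} : Set ℝ) = 0 := by
        have : ({0,1} : Set ℝ) = {0} ∪ {1} := by ext x; simp [or_comm]
        rw [this]
        exact measure_union_null (measure_singleton _) (measure_singleton _)
      filter_upwards [compl_mem_ae_iff.2 h01] with t ht
      simpa [not_or] using ht
    have hmem : ∀ᵐ t ∂(volume.restrict (Icc (0:ℝ) 1)), t ∈ Icc (0:ℝ) 1 :=
      ae_restrict_mem measurableSet_Icc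
    filter_upwards [hmem, ae_restrict_of_ae hrad, ae_restrict_of_ae hne] with t htm htd htn
    have htIoo : t ∈ Ioo (0:ℝ) 1 := ⟨lt_of_le_of_ne htm.1 (Ne.symm htn.1), lt_of_le_of_ne htm.2 htn.2⟩
    have hphi : phi Γ t = ‖deriv Γc t‖ := phi_eq_norm_deriv htIoo htd
    have htend : Tendsto (fun n => q n t) atTop (𝓝 ‖deriv Γc t‖) := by
      have hder : HasDerivAt Γc (deriv Γc t) t := htd.hasDerivAt
      rw [hasDerivAt_iff_tendsto_slope] at hder
      have hseq : Tendsto (fun n : ℕ => t + ((n:ℝ)+1)⁻¹) atTop (𝓝[≠] t) := by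
        apply tendsto_nhdsWithin_of_tendsto_nhds_of_eventually_within
        · have : Tendsto (fun n : ℕ => ((n:ℝ)+1)⁻¹) atTop (𝓝 0) :=
            tendsto_one_div_add_atTop_nhds_zero_nat.congr (by intro n; rw [one_div])
          simpa using (tendsto_const_nhds.add this)
        · filter_upwards with n
          have : (0:ℝ) < ((n:ℝ)+1)⁻¹ := by positivity
          simp only [Set.mem_compl_iff, Set.mem_singleton_iff]
          intro h
          nlinarith [this]
      have := (hder.comp hseq)
      have hnorm := (continuous_norm.tendsto _).comp this
      apply hnorm.congr
      intro n
      simp only [Function.comp_apply, slope_def_module, vsub_eq_sub, add_sub_cancel_left,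
        norm_smul, Real.norm_eq_abs, abs_inv, inv_inv, hq]
      rw [abs_of_pos (by positivity : (0:ℝ) < (n:ℝ)+1)]
    have : liminf (fun n => ENNReal.ofReal (q n t)) atTop = ENNReal.ofReal ‖deriv Γc t‖ :=
      ((ENNReal.continuous_ofReal.tendsto _).comp htend).liminf_eq
    rw [this, hphi]
  -- integral bound for each n
  have hbound : ∀ n, (∫⁻ t in Icc (0:ℝ) 1, ENNReal.ofReal (q n t)) ≤
      eVariationOn Γ (Icc 0 1) := by
    intro n
    set h : ℝ := ((n:ℝ)+1)⁻¹ with hh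
    have hhpos : 0 < h := by positivity
    have hVint : ∀ a b : ℝ, IntervalIntegrable V volume a b := fun a b =>
      hVmono.intervalIntegrable
    have hVh : Monotone (fun t => V (t + h)) := fun x y hxy => hVmono (by linarith)
    have key : ∫ t in (0:ℝ)..1, (V (t + h) - V t) ≤ h * V 1 := by
      have hsplit : ∫ t in (0:ℝ)..1, (V (t + h) - V t) =
          (∫ t in (0:ℝ)..1, V (t + h)) - ∫ t in (0:ℝ)..1, V t := by
        apply intervalIntegral.integral_sub
        · exact hVh.intervalIntegrable
        · exact hVint 0 1
      have htrans : (∫ t in (0:ℝ)..1, V (t + h)) = ∫ t in h..(1+h), V t := by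
        rw [intervalIntegral.integral_comp_add_right V h, zero_add, add_comm]
      have hadd1 : (∫ t in h..(1:ℝ), V t) + ∫ t in (1:ℝ)..(1+h), V t = ∫ t in h..(1+h), V t :=
        intervalIntegral.integral_add_adjacent_intervals (hVint h 1) (hVint 1 (1+h))
      have hadd2 : (∫ t in (0:ℝ)..h, V t) + ∫ t in h..(1:ℝ), V t = ∫ t in (0:ℝ)..1, V t :=
        intervalIntegral.integral_add_adjacent_intervals (hVint 0 h) (hVint h 1)
      have hconst : ∫ t in (1:ℝ)..(1+h), V t = h * V 1 := by
        have : ∫ t in (1:ℝ)..(1+h), V t = ∫ t in (1:ℝ)..(1+h), V 1 := by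
          apply intervalIntegral.integral_congr
          intro u hu
          rw [Set.uIcc_of_le (by linarith : (1:ℝ) ≤ 1+h)] at hu
          exact hV1' u hu.1
        rw [this, intervalIntegral.integral_const, smul_eq_mul, add_sub_cancel_left]
      have hnn : 0 ≤ ∫ t in (0:ℝ)..h, V t :=
        intervalIntegral.integral_nonneg hhpos.le fun u _ => hV0 u
      rw [hsplit, htrans]
      linarith
    set W : ℝ → ℝ := fun t => ((n:ℝ)+1) * (V (t + h) - V t) with hW
    have hWnn : ∀ t, 0 ≤ W t := fun t =>
      mul_nonneg (by positivity) (by have := hVmono (by linarith : t ≤ t + h); linarith)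
    have hWint : IntegrableOn W (Icc (0:ℝ) 1) := by
      rw [integrableOn_Icc_iff_integrableOn_Ioc]
      have h1 : IntegrableOn (fun t => V (t + h)) (Ioc (0:ℝ) 1) :=
        (intervalIntegrable_iff_integrableOn_Ioc_of_le zero_le_one).1 hVh.intervalIntegrable
      have h2 : IntegrableOn V (Ioc (0:ℝ) 1) :=
        (intervalIntegrable_iff_integrableOn_Ioc_of_le zero_le_one).1 (hVint 0 1)
      exact ((h1.sub h2).const_mul _)
    have hqW : ∀ t, q n t ≤ W t := by
      intro t
      have := hdist t (t + h) (by linarith)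
      calc q n t = ((n:ℝ)+1) * ‖Γc (t + h) - Γc t‖ := rfl
        _ ≤ ((n:ℝ)+1) * (V (t + h) - V t) := by
            apply mul_le_mul_of_nonneg_left this (by positivity)
    have hWval : ∫ t in Icc (0:ℝ) 1, W t ≤ V 1 := by
      have : ∫ t in Icc (0:ℝ) 1, W t = ((n:ℝ)+1) * ∫ t in Icc (0:ℝ) 1, (V (t + h) - V t) := by
        simp only [hW]
        exact MeasureTheory.integral_const_mul _ _
      rw [this]
      have heq : ∫ t in Icc (0:ℝ) 1, (V (t + h) - V t) = ∫ t in (0:ℝ)..1, (V (t + h) - V t) := by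
        rw [intervalIntegral.integral_of_le zero_le_one, integral_Icc_eq_integral_Ioc]
      rw [heq]
      calc ((n:ℝ)+1) * ∫ t in (0:ℝ)..1, (V (t + h) - V t) ≤ ((n:ℝ)+1) * (h * V 1) := by
            apply mul_le_mul_of_nonneg_left key (by positivity)
        _ = V 1 := by
            rw [hh]
            field_simp
    calc ∫⁻ t in Icc (0:ℝ) 1, ENNReal.ofReal (q n t)
        ≤ ∫⁻ t in Icc (0:ℝ) 1, ENNReal.ofReal (W t) :=
          lintegral_mono fun t => ENNReal.ofReal_le_ofReal (hqW t)
      _ = ENNReal.ofReal (∫ t in Icc (0:ℝ) 1, W t) :=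
          (ofReal_integral_eq_lintegral_ofReal hWint (Filter.Eventually.of_forall hWnn)).symm
      _ ≤ ENNReal.ofReal (V 1) := ENNReal.ofReal_le_ofReal hWval
      _ = eVariationOn Γ (Icc 0 1) := by rw [hV1, ENNReal.ofReal_toReal hfin]
  -- conclude
  have hint : (∫⁻ t in Icc (0:ℝ) 1, ENNReal.ofReal (phi Γ t)) ≤ eVariationOn Γ (Icc 0 1) := by
    calc (∫⁻ t in Icc (0:ℝ) 1, ENNReal.ofReal (phi Γ t))
        ≤ ∫⁻ t in Icc (0:ℝ) 1, liminf (fun n => ENNReal.ofReal (q n t)) atTop :=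
          lintegral_mono_ae hae
      _ ≤ liminf (fun n => ∫⁻ t in Icc (0:ℝ) 1, ENNReal.ofReal (q n t)) atTop :=
          lintegral_liminf_le fun n => ENNReal.measurable_ofReal.comp (hqmeas n)
      _ ≤ eVariationOn Γ (Icc 0 1) := by
          apply Filter.liminf_le_of_frequently_le'
          exact Filter.Frequently.of_forall hbound
  rw [integral_eq_lintegral_of_nonneg_ae
    (Filter.Eventually.of_forall fun t => phi_nonneg Γ t)
    (measurable_phi Γ).aestronglyMeasurable]
  exact ENNReal.toReal_mono hfin hint

lemma coord_abs_le_norm {N : ℕ} (x : EuclideanSpace ℝ (Fin N)) (i : Fin N) : |x i| ≤ ‖x‖ := by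
  rw [EuclideanSpace.norm_eq]
  have h1 : |x i| = Real.sqrt ((x i)^2) := (Real.sqrt_sq_eq_abs _).symm
  rw [h1]
  apply Real.sqrt_le_sqrt
  have : (x i)^2 = ‖x i‖^2 := by rw [Real.norm_eq_abs, sq_abs]
  rw [this]
  exact Finset.single_le_sum (fun j _ => sq_nonneg ‖x j‖) (Finset.mem_univ i)

lemma coord_lip {N : ℕ} {K : NNReal} {g : ℝ → EuclideanSpace ℝ (Fin N)}
    (hg : LipschitzWith K g) (i : Fin N) : LipschitzWith K (fun s => g s i) := by
  apply LipschitzWith.of_dist_le_mul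
  intro x y
  have h1 : dist (g x i) (g y i) = |(g x - g y) i| := by
    simp [Real.dist_eq, PiLp.sub_apply]
  rw [h1]
  calc |(g x - g y) i| ≤ ‖g x - g y‖ := coord_abs_le_norm _ i
    _ = dist (g x) (g y) := (dist_eq_norm _ _).symm
    _ ≤ K * dist x y := hg.dist_le_mul x y

lemma deriv_coord_bound {N : ℕ} {K : NNReal} {Γ : ℝ → EuclideanSpace ℝ (Fin N)}
    (hΓ : LipschitzOnWith K Γ (Icc 0 1)) {t : ℝ} (ht : t ∈ Ioo (0:ℝ) 1) (i : Fin N) :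
    |deriv (fun s => Γ s i) t| ≤ K := by
  rw [deriv_coord_eq ht i]
  have := norm_deriv_le_of_lipschitz (coord_lip (lip_comp_cl hΓ) i) (x₀ := t)
  simpa [Real.norm_eq_abs] using this

lemma ae_diff_coord {N : ℕ} {K : NNReal} {Γ : ℝ → EuclideanSpace ℝ (Fin N)}
    (hΓ : LipschitzOnWith K Γ (Icc 0 1)) :
    ∀ᵐ t ∂(volume : Measure ℝ), t ∈ Ioo (0:ℝ) 1 →
      ∀ i, DifferentiableAt ℝ (fun s => Γ s i) t := by
  filter_upwards [(lip_comp_cl hΓ).ae_differentiableAt] with t htd htIoo i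
  have h2 : DifferentiableAt ℝ (fun s => (Γ ∘ cl) s i) t :=
    ((EuclideanSpace.proj (𝕜 := ℝ) i).differentiableAt).comp t htd
  apply h2.congr_of_eventuallyEq
  filter_upwards [Ioo_mem_nhds htIoo.1 htIoo.2] with s hs
  simp [Function.comp, cl_eq (Ioo_subset_Icc_self hs)]

lemma telescope {k : ℕ} (a b : Fin k → ℝ) :
    ∏ m, a m - ∏ m, b m =
      ∑ m₀ : Fin k, ∏ m, (if m < m₀ then b m else if m = m₀ then a m - b m else a m) := by
  have h := Finset.prod_sub_ordered (Finset.univ : Finset (Fin k)) a (fun m => a m - b m)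
  simp only [sub_sub_cancel] at h
  have h2 : ∀ m₀ : Fin k,
      (a m₀ - b m₀) * (∏ j ∈ Finset.univ.filter (fun j => j < m₀), b j) *
        ∏ j ∈ Finset.univ.filter (fun j => m₀ < j), a j =
      ∏ m, (if m < m₀ then b m else if m = m₀ then a m - b m else a m) := by
    intro m₀
    rw [← Finset.prod_filter_mul_prod_filter_not Finset.univ (fun m => m < m₀)]
    have e1 : ∏ m ∈ Finset.univ.filter (fun m => m < m₀),
        (if m < m₀ then b m else if m = m₀ then a m - b m else a m) =
        ∏ j ∈ Finset.univ.filter (fun j => j < m₀), b j := by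
      apply Finset.prod_congr rfl
      intro m hm
      rw [Finset.mem_filter] at hm
      simp [hm.2]
    have hsplit : Finset.univ.filter (fun m : Fin k => ¬ m < m₀) =
        insert m₀ (Finset.univ.filter (fun m => m₀ < m)) := by
      ext m
      simp only [Finset.mem_filter, Finset.mem_univ, true_and, Finset.mem_insert, not_lt]
      constructor
      · intro hm
        rcases eq_or_lt_of_le hm with h | h
        · exact Or.inl h.symm
        · exact Or.inr h
      · rintro (rfl | hm)
        · exact le_refl _
        · exact le_of_lt hm
    have e2 : ∏ m ∈ Finset.univ.filter (fun m : Fin k => ¬ m < m₀),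
        (if m < m₀ then b m else if m = m₀ then a m - b m else a m) =
        (a m₀ - b m₀) * ∏ j ∈ Finset.univ.filter (fun j => m₀ < j), a j := by
      rw [hsplit, Finset.prod_insert (by simp)]
      have hm₀ : (if m₀ < m₀ then b m₀ else if m₀ = m₀ then a m₀ - b m₀ else a m₀)
          = a m₀ - b m₀ := by simp
      rw [hm₀]
      congr 1
      apply Finset.prod_congr rfl
      intro m hm
      rw [Finset.mem_filter] at hm
      have h1 : ¬ m < m₀ := not_lt.2 (le_of_lt hm.2)
      have h2 : m ≠ m₀ := ne_of_gt hm.2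
      simp [h1, h2]
    rw [e1, e2]
    ring
  rw [h, sub_sub_cancel]
  exact Finset.sum_congr rfl fun m₀ _ => h2 m₀

/-- the unit cube -/
def cube (k : ℕ) : Set (Fin k → ℝ) := Set.pi Set.univ fun _ => Icc (0:ℝ) 1

lemma cube_measurable {k : ℕ} : MeasurableSet (cube k) :=
  MeasurableSet.univ_pi fun _ => measurableSet_Icc

lemma simplex_subset_cube {k : ℕ} : simplexSet k ⊆ cube k := fun t ht m _ => (ht.2 m)

lemma simplex_measurable {k : ℕ} : MeasurableSet (simplexSet k) := by
  have : simplexSet k =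
      (⋂ (i : Fin k) (j : Fin k) (_ : i ≤ j), {t : Fin k → ℝ | t i ≤ t j}) ∩
      ⋂ (i : Fin k), {t : Fin k → ℝ | 0 ≤ t i ∧ t i ≤ 1} := by
    ext t
    simp only [simplexSet, Set.mem_setOf_eq, Set.mem_inter_iff, Set.mem_iInter]
  rw [this]
  apply MeasurableSet.inter
  · exact MeasurableSet.iInter fun i => MeasurableSet.iInter fun j =>
      MeasurableSet.iInter fun _ => measurableSet_le (measurable_pi_apply i) (measurable_pi_apply j)
  · exact MeasurableSet.iInter fun i =>
      (measurableSet_le measurable_const (measurable_pi_apply i)).inter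
        (measurableSet_le (measurable_pi_apply i) measurable_const)

lemma cube_finite {k : ℕ} : (volume : Measure (Fin k → ℝ)) (cube k) < ⊤ := by
  have : IsCompact (cube k) := isCompact_univ_pi fun _ => isCompact_Icc
  exact this.measure_lt_top

lemma ae_cube_interior {k : ℕ} :
    ∀ᵐ t ∂((volume : Measure (Fin k → ℝ)).restrict (cube k)),
      ∀ m, t m ∈ Ioo (0:ℝ) 1 := by
  have h0 : ∀ m : Fin k, ∀ c : ℝ, (volume : Measure (Fin k → ℝ)) {t | t m = c} = 0 := by
    intro m c
    exact Measure.pi_hyperplane (fun _ => (volume : Measure ℝ)) m c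
  have h1 : ∀ᵐ t ∂(volume : Measure (Fin k → ℝ)), ∀ m, t m ≠ 0 ∧ t m ≠ 1 := by
    rw [MeasureTheory.ae_all_iff]
    intro m
    have := measure_union_null (h0 m 0) (h0 m 1)
    filter_upwards [compl_mem_ae_iff.2 this] with t ht
    simp only [Set.mem_compl_iff, Set.mem_union, Set.mem_setOf_eq, not_or] at ht
    exact ht
  filter_upwards [ae_restrict_of_ae h1, ae_restrict_mem cube_measurable] with t ht1 ht2 m
  have hm : t m ∈ Icc (0:ℝ) 1 := (Set.mem_univ_pi.1 ht2) m
  exact ⟨lt_of_le_of_ne hm.1 (Ne.symm (ht1 m).1), lt_of_le_of_ne hm.2 (ht1 m).2⟩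

lemma cube_fubini {k : ℕ} (u : Fin k → ℝ → ℝ) :
    ∫ t in cube k, ∏ m, u m (t m) = ∏ m, ∫ s in Icc (0:ℝ) 1, u m s := by
  rw [← MeasureTheory.integral_indicator cube_measurable]
  have hident : (cube k).indicator (fun t => ∏ m, u m (t m)) =
      fun t => ∏ m, (Icc (0:ℝ) 1).indicator (u m) (t m) := by
    funext t
    by_cases ht : t ∈ cube k
    · rw [Set.indicator_of_mem ht]
      apply Finset.prod_congr rfl
      intro m _
      rw [Set.indicator_of_mem (ht m (Set.mem_univ m))]
    · rw [Set.indicator_of_notMem ht]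
      have : ∃ m, t m ∉ Icc (0:ℝ) 1 := by
        by_contra hcon
        push_neg at hcon
        exact ht fun m _ => hcon m
      obtain ⟨m, hm⟩ := this
      symm
      apply Finset.prod_eq_zero (Finset.mem_univ m)
      rw [Set.indicator_of_notMem hm]
  rw [hident]
  rw [MeasureTheory.integral_fintype_prod_volume_eq_prod
    (f := fun m s => (Icc (0:ℝ) 1).indicator (u m) s)]
  apply Finset.prod_congr rfl
  intro m _
  rw [MeasureTheory.integral_indicator measurableSet_Icc]

lemma ae_ne01 : ∀ᵐ t ∂(volume : Measure ℝ), t ≠ 0 ∧ t ≠ 1 := by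
  have h01 : (volume : Measure ℝ) ({0,1} : Set ℝ) = 0 := by
    have : ({0,1} : Set ℝ) = {0} ∪ {1} := by ext x; simp [or_comm]
    rw [this]
    exact measure_union_null (measure_singleton _) (measure_singleton _)
  filter_upwards [compl_mem_ae_iff.2 h01] with t ht
  simpa [not_or] using ht

instance cube_finiteMeasure {k : ℕ} :
    IsFiniteMeasure ((volume : Measure (Fin k → ℝ)).restrict (cube k)) :=
  ⟨by rw [Measure.restrict_apply_univ]; exact cube_finite⟩

lemma integrableOn_cube_prod {k : ℕ} (u : Fin k → ℝ → ℝ) (hm : ∀ m, Measurable (u m))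
    {B : ℝ} (hb : ∀ m, ∀ t ∈ Ioo (0:ℝ) 1, |u m t| ≤ B) :
    IntegrableOn (fun t : Fin k → ℝ => ∏ m, u m (t m)) (cube k) := by
  by_cases hk : k = 0
  · subst hk
    simp only [Finset.univ_eq_empty, Finset.prod_empty]
    exact integrableOn_const cube_finite.ne
  have hB : 0 ≤ B := le_trans (abs_nonneg _) (hb ⟨0, Nat.pos_of_ne_zero hk⟩ (1/2) (by norm_num))
  constructor
  · exact (Finset.measurable_prod Finset.univ
      (fun m _ => (hm m).comp (measurable_pi_apply m))).aestronglyMeasurable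
  · apply HasFiniteIntegral.of_bounded (C := B ^ k)
    filter_upwards [ae_cube_interior] with t ht
    rw [Real.norm_eq_abs, Finset.abs_prod]
    calc ∏ m, |u m (t m)| ≤ ∏ _m : Fin k, B :=
          Finset.prod_le_prod (fun m _ => abs_nonneg _) (fun m _ => hb m _ (ht m))
      _ = B ^ k := by rw [Finset.prod_const, Finset.card_univ, Fintype.card_fin]

end SigAux

open SigAux

/-- **Local Lipschitz continuity of the signature.** For every `k ≥ 1` there is a
constant `C_k > 0` such that for all `N ≥ 1`, `L > 0`, and Lipschitz paths
`Γ₁, Γ₂ : [0,1] → ℝ^N` with 1-variations bounded by `L`,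
`(Σ_I (S^I(Γ₁) − S^I(Γ₂))²)^{1/2} ≤ C_k · L^{k−1} · |Γ₁ − Γ₂|₁`,
the sum running over all multi-indices `I` of length `k` with entries in `{1, …, N}`. -/
theorem sig_local_lipschitz (k : ℕ) (hk : 1 ≤ k) :
    ∃ C : ℝ, 0 < C ∧
      ∀ (N : ℕ), 1 ≤ N → ∀ (L : ℝ), 0 < L →
        ∀ Γ₁ Γ₂ : ℝ → EuclideanSpace ℝ (Fin N),
          (∃ K : NNReal, LipschitzOnWith K Γ₁ (Set.Icc 0 1)) →
          (∃ K : NNReal, LipschitzOnWith K Γ₂ (Set.Icc 0 1)) →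
          oneVariation Γ₁ ≤ ENNReal.ofReal L →
          oneVariation Γ₂ ≤ ENNReal.ofReal L →
          Real.sqrt (∑ I : Fin k → Fin N, (sig Γ₁ I - sig Γ₂ I) ^ 2) ≤
            C * L ^ (k - 1) * (oneVariation (Γ₁ - Γ₂)).toReal := by
  refine ⟨(k : ℝ), by exact_mod_cast Nat.pos_of_ne_zero (by omega), ?_⟩
  intro N hN L hL Γ₁ Γ₂ hLip₁ hLip₂ hV₁ hV₂
  obtain ⟨K₁, hK₁⟩ := hLip₁
  obtain ⟨K₂, hK₂⟩ := hLip₂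
  set Dv : ℝ := (oneVariation (Γ₁ - Γ₂)).toReal with hDv
  have hDvnn : 0 ≤ Dv := ENNReal.toReal_nonneg
  have hLnn : 0 ≤ L := hL.le
  -- coordinate derivatives
  set d1 : Fin N → ℝ → ℝ := fun i t => deriv (fun s => Γ₁ s i) t with hd1
  set d2 : Fin N → ℝ → ℝ := fun i t => deriv (fun s => Γ₂ s i) t with hd2
  set B : ℝ := (K₁ : ℝ) + (K₂ : ℝ) with hB
  have hBnn : 0 ≤ B := by positivity
  set w : Fin k → Fin k → Fin N → ℝ → ℝ :=
    fun m₀ m i => if m < m₀ then d2 i else if m = m₀ then (fun t => d1 i t - d2 i t) else d1 i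
    with hw
  have hd1meas : ∀ i, Measurable (d1 i) := fun i => measurable_deriv _
  have hd2meas : ∀ i, Measurable (d2 i) := fun i => measurable_deriv _
  have hwmeas : ∀ m₀ m i, Measurable (w m₀ m i) := by
    intro m₀ m i
    rw [hw]
    dsimp only
    split_ifs
    · exact hd2meas i
    · exact (hd1meas i).sub (hd2meas i)
    · exact hd1meas i
  have hd1b : ∀ i, ∀ t ∈ Ioo (0:ℝ) 1, |d1 i t| ≤ (K₁:ℝ) := fun i t ht =>
    deriv_coord_bound hK₁ ht i
  have hd2b : ∀ i, ∀ t ∈ Ioo (0:ℝ) 1, |d2 i t| ≤ (K₂:ℝ) := fun i t ht =>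
    deriv_coord_bound hK₂ ht i
  have hwb : ∀ m₀ m i, ∀ t ∈ Ioo (0:ℝ) 1, |w m₀ m i t| ≤ B := by
    intro m₀ m i t ht
    rw [hw]
    dsimp only
    split_ifs
    · exact le_trans (hd2b i t ht) (by rw [hB]; linarith [NNReal.coe_nonneg K₁])
    · calc |d1 i t - d2 i t| ≤ |d1 i t| + |d2 i t| := abs_sub _ _
        _ ≤ (K₁:ℝ) + (K₂:ℝ) := add_le_add (hd1b i t ht) (hd2b i t ht)
    · exact le_trans (hd1b i t ht) (by rw [hB]; linarith [NNReal.coe_nonneg K₂])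
  -- the ℓ²-norms of the columns
  set ψ : Fin k → Fin k → ℝ → ℝ :=
    fun m₀ m s => Real.sqrt (∑ i, (w m₀ m i s) ^ 2) with hψ
  have hψnn : ∀ m₀ m s, 0 ≤ ψ m₀ m s := fun _ _ _ => Real.sqrt_nonneg _
  have hψint : ∀ m₀ m, ∫ s in Icc (0:ℝ) 1, ψ m₀ m s ≤ (if m = m₀ then Dv else L) := by
    intro m₀ m
    by_cases hmm : m = m₀
    · subst hmm
      rw [if_pos rfl]
      have hsub : LipschitzOnWith (K₁ + K₂) (Γ₁ - Γ₂) (Icc (0:ℝ) 1) := hK₁.sub hK₂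
      have hcong : ∫ s in Icc (0:ℝ) 1, ψ m m s = ∫ s in Icc (0:ℝ) 1, phi (Γ₁ - Γ₂) s := by
        apply setIntegral_congr_ae measurableSet_Icc
        filter_upwards [ae_diff_coord hK₁, ae_diff_coord hK₂, ae_ne01] with s hs1 hs2 hsn hmem
        have hsIoo : s ∈ Ioo (0:ℝ) 1 :=
          ⟨lt_of_le_of_ne hmem.1 (Ne.symm hsn.1), lt_of_le_of_ne hmem.2 hsn.2⟩
        rw [hψ, hw]
        dsimp only
        unfold phi
        congr 1
        apply Finset.sum_congr rfl
        intro i _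
        congr 1
        have hco : (fun u => (Γ₁ - Γ₂) u i) = fun u => Γ₁ u i - Γ₂ u i := by
          funext u
          simp [Pi.sub_apply, PiLp.sub_apply]
        rw [hco, deriv_fun_sub (hs1 hsIoo i) (hs2 hsIoo i), if_neg (lt_irrefl m), if_pos rfl]
      rw [hcong]
      exact integral_phi_le hsub
    · rw [if_neg hmm]
      by_cases hlt : m < m₀
      · have : ψ m₀ m = phi Γ₂ := by
          funext s
          rw [hψ, hw]
          dsimp only
          simp only [if_pos hlt]
          rfl
        rw [this]
        calc ∫ s in Icc (0:ℝ) 1, phi Γ₂ s ≤ (eVariationOn Γ₂ (Icc 0 1)).toReal :=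
              integral_phi_le hK₂
          _ ≤ L := by
              have := ENNReal.toReal_mono (by simp) hV₂
              rwa [ENNReal.toReal_ofReal hLnn] at this
      · have : ψ m₀ m = phi Γ₁ := by
          funext s
          rw [hψ, hw]
          dsimp only
          simp only [if_neg hlt, if_neg hmm]
          rfl
        rw [this]
        calc ∫ s in Icc (0:ℝ) 1, phi Γ₁ s ≤ (eVariationOn Γ₁ (Icc 0 1)).toReal :=
              integral_phi_le hK₁
          _ ≤ L := by
              have := ENNReal.toReal_mono (by simp) hV₁
              rwa [ENNReal.toReal_ofReal hLnn] at this
  -- vector-valued integrands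
  set F : Fin k → (Fin k → ℝ) → EuclideanSpace ℝ (Fin k → Fin N) :=
    fun m₀ t => (EuclideanSpace.equiv (Fin k → Fin N) ℝ).symm
      (fun I => ∏ m, w m₀ m (I m) (t m)) with hF
  have hFcoord : ∀ m₀ t I, F m₀ t I = ∏ m, w m₀ m (I m) (t m) := by
    intro m₀ t I
    rw [hF]
    rfl
  have hFnorm : ∀ m₀ t, ‖F m₀ t‖ = ∏ m, ψ m₀ m (t m) := by
    intro m₀ t
    rw [EuclideanSpace.norm_eq]
    have h1 : ∑ I : Fin k → Fin N, ‖F m₀ t I‖ ^ 2 = ∏ m, ∑ i, (w m₀ m i (t m)) ^ 2 := by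
      rw [Finset.prod_univ_sum (fun _ => (Finset.univ : Finset (Fin N)))
        (fun m i => (w m₀ m i (t m)) ^ 2)]
      rw [Fintype.piFinset_univ]
      apply Finset.sum_congr rfl
      intro I _
      rw [hFcoord, Real.norm_eq_abs, sq_abs, ← Finset.prod_pow]
    rw [h1]
    have h2 : (∏ m, ψ m₀ m (t m)) ^ 2 = ∏ m, ∑ i, (w m₀ m i (t m)) ^ 2 := by
      rw [← Finset.prod_pow]
      apply Finset.prod_congr rfl
      intro m _
      rw [hψ]
      exact Real.sq_sqrt (Finset.sum_nonneg fun i _ => sq_nonneg _)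
    rw [← h2, Real.sqrt_sq (Finset.prod_nonneg fun m _ => hψnn m₀ m (t m))]
  have hFmeas : ∀ m₀, Measurable (F m₀) := by
    intro m₀
    apply (EuclideanSpace.equiv (Fin k → Fin N) ℝ).symm.continuous.measurable.comp
    apply measurable_pi_lambda
    intro I
    exact Finset.measurable_prod _ fun m _ => (hwmeas m₀ m (I m)).comp (measurable_pi_apply m)
  have hFint : ∀ m₀, IntegrableOn (F m₀) (cube k) := by
    intro m₀
    constructor
    · exact (hFmeas m₀).aestronglyMeasurable
    · apply HasFiniteIntegral.of_bounded (C := (Real.sqrt ((N:ℝ) * B^2)) ^ k)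
      filter_upwards [ae_cube_interior] with t ht
      rw [hFnorm]
      have hbd : ∀ m, ψ m₀ m (t m) ≤ Real.sqrt ((N:ℝ) * B ^ 2) := by
        intro m
        rw [hψ]
        dsimp only
        apply Real.sqrt_le_sqrt
        calc ∑ i, (w m₀ m i (t m)) ^ 2 ≤ ∑ _i : Fin N, B ^ 2 :=
              Finset.sum_le_sum fun i _ => by
                have h := hwb m₀ m i (t m) (ht m)
                calc (w m₀ m i (t m)) ^ 2 = |w m₀ m i (t m)| ^ 2 := (sq_abs _).symm
                  _ ≤ B ^ 2 := pow_le_pow_left₀ (abs_nonneg _) h 2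
          _ = (N:ℝ) * B ^ 2 := by rw [Finset.sum_const, Finset.card_univ, Fintype.card_fin]; ring
      calc ∏ m, ψ m₀ m (t m) ≤ ∏ _m : Fin k, Real.sqrt ((N:ℝ) * B ^ 2) :=
            Finset.prod_le_prod (fun m _ => hψnn m₀ m (t m)) (fun m _ => hbd m)
        _ = Real.sqrt ((N:ℝ) * B ^ 2) ^ k := by
            rw [Finset.prod_const, Finset.card_univ, Fintype.card_fin]
  have hFintS : ∀ m₀, IntegrableOn (F m₀) (simplexSet k) := fun m₀ =>
    (hFint m₀).mono_set simplex_subset_cube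
  -- scalar integrability on the simplex
  have hintD : ∀ (v : Fin k → Fin N → ℝ → ℝ), (∀ m i, Measurable (v m i)) →
      (∀ m i, ∀ t ∈ Ioo (0:ℝ) 1, |v m i t| ≤ B) → ∀ (I : Fin k → Fin N),
      IntegrableOn (fun t : Fin k → ℝ => ∏ m, v m (I m) (t m)) (simplexSet k) := by
    intro v hv hvb I
    exact (integrableOn_cube_prod (fun m => v m (I m)) (fun m => hv m (I m))
      (fun m => hvb m (I m))).mono_set simplex_subset_cube
  have hd1D : ∀ m i, Measurable ((fun (_ : Fin k) => d1) m i) := fun _ i => hd1meas i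
  have hd2D : ∀ m i, Measurable ((fun (_ : Fin k) => d2) m i) := fun _ i => hd2meas i
  -- the telescoping identity at the level of integrals
  have htele : ∀ I : Fin k → Fin N,
      sig Γ₁ I - sig Γ₂ I = ∑ m₀, ∫ t in simplexSet k, F m₀ t I := by
    intro I
    have hint1 : IntegrableOn (fun t : Fin k → ℝ => ∏ m, d1 (I m) (t m)) (simplexSet k) :=
      hintD (fun _ => d1) hd1D (fun _ i t ht => le_trans (hd1b i t ht) (by rw [hB]; linarith [NNReal.coe_nonneg K₂])) I
    have hint2 : IntegrableOn (fun t : Fin k → ℝ => ∏ m, d2 (I m) (t m)) (simplexSet k) :=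
      hintD (fun _ => d2) hd2D (fun _ i t ht => le_trans (hd2b i t ht) (by rw [hB]; linarith [NNReal.coe_nonneg K₁])) I
    have hintw : ∀ m₀, IntegrableOn (fun t : Fin k → ℝ => ∏ m, w m₀ m (I m) (t m))
        (simplexSet k) := fun m₀ =>
      hintD (w m₀) (hwmeas m₀) (hwb m₀) I
    have h1 : sig Γ₁ I - sig Γ₂ I =
        ∫ t in simplexSet k, (∏ m, d1 (I m) (t m) - ∏ m, d2 (I m) (t m)) := by
      unfold sig
      rw [← integral_sub hint1 hint2]
    rw [h1]
    have h2 : ∀ t : Fin k → ℝ, (∏ m, d1 (I m) (t m)) - ∏ m, d2 (I m) (t m) =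
        ∑ m₀, ∏ m, w m₀ m (I m) (t m) := by
      intro t
      have := telescope (fun m => d1 (I m) (t m)) (fun m => d2 (I m) (t m))
      rw [this]
      apply Finset.sum_congr rfl
      intro m₀ _
      apply Finset.prod_congr rfl
      intro m _
      rw [hw]
      dsimp only
      split_ifs <;> rfl
    calc ∫ t in simplexSet k, (∏ m, d1 (I m) (t m) - ∏ m, d2 (I m) (t m))
        = ∫ t in simplexSet k, ∑ m₀, ∏ m, w m₀ m (I m) (t m) := by
          apply setIntegral_congr_ae simplex_measurable
          filter_upwards with t _
          exact h2 t
      _ = ∑ m₀, ∫ t in simplexSet k, ∏ m, w m₀ m (I m) (t m) :=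
          integral_finset_sum _ fun m₀ _ => hintw m₀
      _ = ∑ m₀, ∫ t in simplexSet k, F m₀ t I := by
          apply Finset.sum_congr rfl
          intro m₀ _
          apply setIntegral_congr_ae simplex_measurable
          filter_upwards with t _
          rw [hFcoord]
  -- the master vector
  set S : EuclideanSpace ℝ (Fin k → Fin N) := ∑ m₀, ∫ t in simplexSet k, F m₀ t with hS
  have hScoord : ∀ I, S I = sig Γ₁ I - sig Γ₂ I := by
    intro I
    have h1 : S I = EuclideanSpace.proj (𝕜 := ℝ) I S := rfl
    rw [htele I, h1, hS, map_sum (EuclideanSpace.proj (𝕜 := ℝ) I) _ Finset.univ]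
    apply Finset.sum_congr rfl
    intro m₀ _
    rw [← ContinuousLinearMap.integral_comp_comm _ (hFintS m₀)]
    rfl
  have hLHS : Real.sqrt (∑ I : Fin k → Fin N, (sig Γ₁ I - sig Γ₂ I) ^ 2) = ‖S‖ := by
    rw [EuclideanSpace.norm_eq]
    congr 1
    apply Finset.sum_congr rfl
    intro I _
    rw [hScoord I, Real.norm_eq_abs, sq_abs]
  rw [hLHS]
  -- bound the norm
  have hterm : ∀ m₀, ‖∫ t in simplexSet k, F m₀ t‖ ≤ L ^ (k-1) * Dv := by
    intro m₀
    calc ‖∫ t in simplexSet k, F m₀ t‖ ≤ ∫ t in simplexSet k, ‖F m₀ t‖ :=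
          norm_integral_le_integral_norm _
      _ ≤ ∫ t in cube k, ‖F m₀ t‖ := by
          apply setIntegral_mono_set (hFint m₀).norm
          · filter_upwards with t
            exact norm_nonneg _
          · exact HasSubset.Subset.eventuallyLE simplex_subset_cube
      _ = ∫ t in cube k, ∏ m, ψ m₀ m (t m) := by
          apply setIntegral_congr_ae cube_measurable
          filter_upwards with t _
          rw [hFnorm]
      _ = ∏ m, ∫ s in Icc (0:ℝ) 1, ψ m₀ m s := cube_fubini _
      _ ≤ L ^ (k-1) * Dv := by
          have hnn : ∀ m, 0 ≤ ∫ s in Icc (0:ℝ) 1, ψ m₀ m s := fun m =>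
            setIntegral_nonneg measurableSet_Icc fun s _ => hψnn m₀ m s
          rw [← Finset.mul_prod_erase Finset.univ _ (Finset.mem_univ m₀)]
          have h1 : ∫ s in Icc (0:ℝ) 1, ψ m₀ m₀ s ≤ Dv := by
            have := hψint m₀ m₀
            rwa [if_pos rfl] at this
          have h2 : ∏ m ∈ Finset.univ.erase m₀, ∫ s in Icc (0:ℝ) 1, ψ m₀ m s ≤ L ^ (k-1) := by
            calc ∏ m ∈ Finset.univ.erase m₀, ∫ s in Icc (0:ℝ) 1, ψ m₀ m s
                ≤ ∏ _m ∈ Finset.univ.erase m₀, L := by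
                  apply Finset.prod_le_prod (fun m _ => hnn m)
                  intro m hm
                  have := hψint m₀ m
                  rwa [if_neg (Finset.ne_of_mem_erase hm)] at this
              _ = L ^ (k-1) := by
                  rw [Finset.prod_const, Finset.card_erase_of_mem (Finset.mem_univ m₀),
                    Finset.card_univ, Fintype.card_fin]
          calc (∫ s in Icc (0:ℝ) 1, ψ m₀ m₀ s) *
                ∏ m ∈ Finset.univ.erase m₀, ∫ s in Icc (0:ℝ) 1, ψ m₀ m s
              ≤ Dv * L ^ (k-1) := by
                apply mul_le_mul h1 h2 (Finset.prod_nonneg fun m _ => hnn m) hDvnn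
            _ = L ^ (k-1) * Dv := mul_comm _ _
  calc ‖S‖ ≤ ∑ m₀ : Fin k, ‖∫ t in simplexSet k, F m₀ t‖ := norm_sum_le _ _
    _ ≤ ∑ _m₀ : Fin k, L ^ (k-1) * Dv := Finset.sum_le_sum fun m₀ _ => hterm m₀
    _ = (k:ℝ) * L ^ (k-1) * Dv := by
        rw [Finset.sum_const, Finset.card_univ, Fintype.card_fin]
        simp [nsmul_eq_mul, mul_assoc]
end
end

section
/- Concatenation of paths respects tree-like equivalence: if Γ₁, Γ₁', Γ₂, Γ₂' : [0,1] → ℝ^N are Lipschitz paths with Γ₁ tree-like equivalent to Γ₁' and Γ₂ tree-like equivalent to Γ₂', then Γ₁ * Γ₂ is tree-like equivalent to Γ₁' * Γ₂'. -/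
noncomputable section

/-- The inverse path `Γ⁻¹(t) = Γ(1−t)`. -/
def pathInv {N : ℕ} (Γ : ℝ → EuclideanSpace ℝ (Fin N)) : ℝ → EuclideanSpace ℝ (Fin N) :=
  fun t => Γ (1 - t)

/-- A path `Γ : [0,1] → ℝ^N` is Lipschitz tree-like if there is a continuous nonnegative
function `h : [0,1] → ℝ` of bounded variation with `h(0) = h(1) = 0` such that
`‖Γ(t) − Γ(s)‖ ≤ h(s) + h(t) − 2 inf_{u ∈ [s,t]} h(u)` for all `0 ≤ s ≤ t ≤ 1`. -/
def LipschitzTreeLike {N : ℕ} (Γ : ℝ → EuclideanSpace ℝ (Fin N)) : Prop :=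
  ∃ h : ℝ → ℝ, ContinuousOn h (Set.Icc 0 1) ∧ (∀ t ∈ Set.Icc (0:ℝ) 1, 0 ≤ h t) ∧
    BoundedVariationOn h (Set.Icc 0 1) ∧ h 0 = 0 ∧ h 1 = 0 ∧
    ∀ s t : ℝ, 0 ≤ s → s ≤ t → t ≤ 1 →
      ‖Γ t - Γ s‖ ≤ h s + h t - 2 * sInf (h '' Set.Icc s t)

/-- Two paths are tree-like equivalent if `Γ₁ * Γ₂⁻¹` is Lipschitz tree-like. -/
def TreeLikeEquiv {N : ℕ} (Γ₁ Γ₂ : ℝ → EuclideanSpace ℝ (Fin N)) : Prop :=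
  LipschitzTreeLike (concat Γ₁ (pathInv Γ₂))

/-- A Lipschitz path on `[0,1]`. -/
def IsLipPath {N : ℕ} (Γ : ℝ → EuclideanSpace ℝ (Fin N)) : Prop :=
  ∃ K : NNReal, LipschitzOnWith K Γ (Set.Icc 0 1)


lemma aux_bv_add {f g : ℝ → ℝ} {s : Set ℝ} (hf : BoundedVariationOn f s)
    (hg : BoundedVariationOn g s) : BoundedVariationOn (fun t => f t + g t) s := by
  have hle : eVariationOn (fun t => f t + g t) s ≤ eVariationOn f s + eVariationOn g s := by
    apply iSup_le
    rintro ⟨n, u, hu, us⟩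
    calc ∑ i ∈ Finset.range n, edist (f (u (i+1)) + g (u (i+1))) (f (u i) + g (u i))
        ≤ ∑ i ∈ Finset.range n,
            (edist (f (u (i+1))) (f (u i)) + edist (g (u (i+1))) (g (u i))) :=
          Finset.sum_le_sum fun i _ => edist_add_add_le _ _ _ _
      _ = (∑ i ∈ Finset.range n, edist (f (u (i+1))) (f (u i)))
          + ∑ i ∈ Finset.range n, edist (g (u (i+1))) (g (u i)) := Finset.sum_add_distrib
      _ ≤ _ := add_le_add (eVariationOn.sum_le (f := f) (n := n) hu us) (eVariationOn.sum_le (f := g) (n := n) hu us)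
  exact ne_top_of_le_ne_top (ENNReal.add_ne_top.2 ⟨hf, hg⟩) hle

lemma aux_bv_comp {f : ℝ → ℝ} {φ : ℝ → ℝ} {s t : Set ℝ} (hf : BoundedVariationOn f s)
    (hφ : MonotoneOn φ t) (hm : Set.MapsTo φ t s) :
    BoundedVariationOn (fun x => f (φ x)) t :=
  ne_top_of_le_ne_top hf (eVariationOn.comp_le_of_monotoneOn f φ hφ hm)

section XeqLemmas

variable {N : ℕ} (Γ₁ Γ₂ Γ₁' Γ₂' : ℝ → EuclideanSpace ℝ (Fin N))

lemma concat_zero' : concat Γ₁ Γ₂ 0 = Γ₁ 0 := by norm_num [concat]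

lemma concat_half' : concat Γ₁ Γ₂ (1/2 : ℝ) = Γ₁ 1 := by norm_num [concat]

lemma concat_inv_one' : concat Γ₂ (pathInv Γ₂') 1 = Γ₂ 1 - Γ₂' 1 + Γ₂' 0 := by
  norm_num [concat, pathInv]

lemma Xeq1 {u : ℝ} (h4 : u ≤ 1/4) :
    concat (concat Γ₁ Γ₂) (pathInv (concat Γ₁' Γ₂')) u = concat Γ₁ (pathInv Γ₁') (2*u) := by
  simp only [concat, pathInv]
  rw [if_pos (show u < 1/2 by linarith)]
  split_ifs with h
  · rfl
  · have hu : u = 1/4 := by linarith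
    subst hu
    norm_num

lemma Xeq2 {u : ℝ} (h1 : 1/4 ≤ u) (h2 : u ≤ 3/4) :
    concat (concat Γ₁ Γ₂) (pathInv (concat Γ₁' Γ₂')) u
      = Γ₁ 1 - Γ₂ 0 + concat Γ₂ (pathInv Γ₂') (2*u - 1/2) := by
  simp only [concat, pathInv]
  norm_num
  split_ifs <;> first
    | (exfalso; linarith)
    | (ring_nf; done)
    | (ring_nf; abel1)

lemma Xeq3 {u : ℝ} (h3 : 3/4 ≤ u) :
    concat (concat Γ₁ Γ₂) (pathInv (concat Γ₁' Γ₂')) u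
      = (Γ₂ 1 - Γ₂' 1 + Γ₂' 0 - Γ₂ 0) + concat Γ₁ (pathInv Γ₁') (2*u - 1) := by
  simp only [concat, pathInv]
  norm_num
  split_ifs <;> first
    | (exfalso; linarith)
    | (ring_nf; done)
    | (ring_nf; abel1)
    | (have hu : u = 3/4 := by linarith
       subst hu
       norm_num
       abel1)

end XeqLemmas

set_option maxHeartbeats 2000000

/-- Concatenation of paths respects tree-like equivalence: if
`Γ₁ ~ Γ₁'` and `Γ₂ ~ Γ₂'` (tree-like equivalence of Lipschitz paths), then
`Γ₁ * Γ₂ ~ Γ₁' * Γ₂'`. -/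
theorem concat_respects_treeLikeEquiv {N : ℕ}
    (Γ₁ Γ₁' Γ₂ Γ₂' : ℝ → EuclideanSpace ℝ (Fin N))
    (h₁ : IsLipPath Γ₁) (h₁' : IsLipPath Γ₁') (h₂ : IsLipPath Γ₂) (h₂' : IsLipPath Γ₂')
    (e₁ : TreeLikeEquiv Γ₁ Γ₁') (e₂ : TreeLikeEquiv Γ₂ Γ₂') :
    TreeLikeEquiv (concat Γ₁ Γ₂) (concat Γ₁' Γ₂') := by
  obtain ⟨hA, hAc, hAnn, hABV, hA0, hA1, PA⟩ := e₁
  obtain ⟨hB, hBc, hBnn, hBBV, hB0, hB1, PB⟩ := e₂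
  set A : ℝ → EuclideanSpace ℝ (Fin N) := concat Γ₁ (pathInv Γ₁') with hAdef
  set B : ℝ → EuclideanSpace ℝ (Fin N) := concat Γ₂ (pathInv Γ₂') with hBdef
  have eA : A (1/2) = Γ₁ 1 := concat_half' Γ₁ (pathInv Γ₁')
  have eB0 : B 0 = Γ₂ 0 := concat_zero' Γ₂ (pathInv Γ₂')
  have eB1 : B 1 = Γ₂ 1 - Γ₂' 1 + Γ₂' 0 := concat_inv_one' Γ₂ Γ₂'
  set φ : ℝ → ℝ := fun t => min (2*t) (max (2*t-1) (1/2)) with hφdef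
  set ψ : ℝ → ℝ := fun t => min 1 (max 0 (2*t - 1/2)) with hψdef
  set hh : ℝ → ℝ := fun u => hA (φ u) + hB (ψ u) with hhdef
  -- branch values
  have hb1 : ∀ u : ℝ, u ≤ 1/4 → hh u = hA (2*u) := by
    intro u hu
    have e1 : φ u = 2*u := min_eq_left (le_max_of_le_right (by linarith))
    have e2 : ψ u = 0 := by
      simp only [hψdef]
      rw [max_eq_left (by linarith : 2*u - 1/2 ≤ (0:ℝ)), min_eq_right (by norm_num)]
    simp only [hhdef, e1, e2, hB0, add_zero]
  have hb2 : ∀ u : ℝ, 1/4 ≤ u → u ≤ 3/4 → hh u = hA (1/2) + hB (2*u - 1/2) := by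
    intro u hu1 hu2
    have e1 : φ u = 1/2 := by
      simp only [hφdef]
      rw [max_eq_right (by linarith : 2*u-1 ≤ (1/2:ℝ)), min_eq_right (by linarith)]
    have e2 : ψ u = 2*u - 1/2 := by
      simp only [hψdef]
      rw [max_eq_right (by linarith : (0:ℝ) ≤ 2*u - 1/2), min_eq_right (by linarith)]
    simp only [hhdef, e1, e2]
  have hb3 : ∀ u : ℝ, 3/4 ≤ u → hh u = hA (2*u - 1) := by
    intro u hu
    have e1 : φ u = 2*u - 1 := by
      simp only [hφdef]
      rw [max_eq_left (by linarith : (1/2:ℝ) ≤ 2*u-1), min_eq_right (by linarith)]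
    have e2 : ψ u = 1 := by
      simp only [hψdef]
      rw [max_eq_right (by linarith : (0:ℝ) ≤ 2*u - 1/2), min_eq_left (by linarith)]
    simp only [hhdef, e1, e2, hB1, add_zero]
  have mφ : Set.MapsTo φ (Set.Icc 0 1) (Set.Icc 0 1) := by
    intro x hx
    constructor
    · exact le_min (by linarith [hx.1]) (le_trans (by norm_num) (le_max_right (2*x-1) (1/2)))
    · exact le_trans (min_le_right _ _) (max_le (by linarith [hx.2]) (by norm_num))
  have mψ : Set.MapsTo ψ (Set.Icc 0 1) (Set.Icc 0 1) := by
    intro x hx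
    exact ⟨le_min (by norm_num) (le_max_left _ _), min_le_left _ _⟩
  have monoφ : Monotone φ := fun a b hab =>
    min_le_min (by linarith) (max_le_max (by linarith) le_rfl)
  have monoψ : Monotone ψ := fun a b hab =>
    min_le_min le_rfl (max_le_max le_rfl (by linarith))
  have contφ : Continuous φ := by
    apply Continuous.min
    · exact continuous_const.mul continuous_id
    · exact ((continuous_const.mul continuous_id).sub continuous_const).max continuous_const
  have contψ : Continuous ψ := by
    apply Continuous.min continuous_const
    exact continuous_const.max ((continuous_const.mul continuous_id).sub continuous_const)
  refine ⟨hh, ?_, ?_, ?_, ?_, ?_, ?_⟩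
  · exact (hAc.comp contφ.continuousOn mφ).add (hBc.comp contψ.continuousOn mψ)
  · intro u hu
    exact add_nonneg (hAnn _ (mφ hu)) (hBnn _ (mψ hu))
  · exact aux_bv_add (aux_bv_comp hABV (monoφ.monotoneOn _) mφ)
      (aux_bv_comp hBBV (monoψ.monotoneOn _) mψ)
  · rw [hb1 0 (by norm_num)]; norm_num [hA0]
  · rw [hb3 1 (by norm_num)]; norm_num [hA1]
  intro s t hs hst ht
  have bdd : BddBelow (hh '' Set.Icc s t) := by
    refine ⟨0, ?_⟩
    rintro x ⟨y, hy, rfl⟩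
    exact add_nonneg (hAnn _ (mφ ⟨hs.trans hy.1, hy.2.trans ht⟩))
      (hBnn _ (mψ ⟨hs.trans hy.1, hy.2.trans ht⟩))
  by_cases c1 : t ≤ 1/4
  · -- Case 1 : s ≤ t ≤ 1/4
    rw [Xeq1 Γ₁ Γ₂ Γ₁' Γ₂' c1, Xeq1 Γ₁ Γ₂ Γ₁' Γ₂' (hst.trans c1), ← hAdef,
      hb1 s (hst.trans c1), hb1 t c1]
    have hPA := PA (2*s) (2*t) (by linarith) (by linarith) (by linarith)
    have hsub : hA '' Set.Icc (2*s) (2*t) ⊆ hh '' Set.Icc s t := by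
      rintro _ ⟨x, hx, rfl⟩
      refine ⟨x/2, ⟨by linarith [hx.1], by linarith [hx.2]⟩, ?_⟩
      rw [hb1 (x/2) (by linarith [hx.2])]
      congr 1; ring
    have hne : (hA '' Set.Icc (2*s) (2*t)).Nonempty :=
      ⟨hA (2*s), ⟨2*s, ⟨le_rfl, by linarith⟩, rfl⟩⟩
    have hinf := csInf_le_csInf bdd hne hsub
    linarith
  by_cases c2 : s ≤ 1/4
  · by_cases c3 : t ≤ 3/4
    · -- Case 2 : s ≤ 1/4 ≤ t ≤ 3/4
      rw [Xeq2 Γ₁ Γ₂ Γ₁' Γ₂' (by linarith) c3, Xeq1 Γ₁ Γ₂ Γ₁' Γ₂' c2, ← hAdef, ← hBdef,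
        hb1 s c2, hb2 t (by linarith) c3]
      have dec : Γ₁ 1 - Γ₂ 0 + B (2*t - 1/2) - A (2*s)
          = (B (2*t - 1/2) - B 0) + (A (1/2) - A (2*s)) := by
        rw [eA, eB0]; abel
      have hPB := PB 0 (2*t - 1/2) le_rfl (by linarith) (by linarith)
      have hPA := PA (2*s) (1/2) (by linarith) (by linarith) (by norm_num)
      have iBnn : 0 ≤ sInf (hB '' Set.Icc 0 (2*t - 1/2)) := by
        apply Real.sInf_nonneg
        rintro _ ⟨x, hx, rfl⟩
        exact hBnn x ⟨hx.1, by linarith [hx.2]⟩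
      have hsub : hA '' Set.Icc (2*s) (1/2) ⊆ hh '' Set.Icc s t := by
        rintro _ ⟨x, hx, rfl⟩
        refine ⟨x/2, ⟨by linarith [hx.1], by linarith [hx.2]⟩, ?_⟩
        rw [hb1 (x/2) (by linarith [hx.2])]
        congr 1; ring
      have hne : (hA '' Set.Icc (2*s) (1/2)).Nonempty :=
        ⟨hA (2*s), ⟨2*s, ⟨le_rfl, by linarith⟩, rfl⟩⟩
      have hinf := csInf_le_csInf bdd hne hsub
      calc ‖Γ₁ 1 - Γ₂ 0 + B (2*t - 1/2) - A (2*s)‖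
          ≤ ‖B (2*t - 1/2) - B 0‖ + ‖A (1/2) - A (2*s)‖ := by
            rw [dec]; exact norm_add_le _ _
        _ ≤ _ := by linarith
    · -- Case 3 : s ≤ 1/4, 3/4 < t
      rw [Xeq3 Γ₁ Γ₂ Γ₁' Γ₂' (by linarith), Xeq1 Γ₁ Γ₂ Γ₁' Γ₂' c2, ← hAdef,
        hb1 s c2, hb3 t (by linarith)]
      have dec : (Γ₂ 1 - Γ₂' 1 + Γ₂' 0 - Γ₂ 0) + A (2*t - 1) - A (2*s)
          = (B 1 - B 0) + (A (2*t - 1) - A (2*s)) := by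
        rw [eB1, eB0]; abel
      have hPB := PB 0 1 le_rfl zero_le_one le_rfl
      have hPA := PA (2*s) (2*t - 1) (by linarith) (by linarith) (by linarith)
      have iBnn : 0 ≤ sInf (hB '' Set.Icc 0 1) := by
        apply Real.sInf_nonneg
        rintro _ ⟨x, hx, rfl⟩
        exact hBnn x hx
      have hsub : hA '' Set.Icc (2*s) (2*t - 1) ⊆ hh '' Set.Icc s t := by
        rintro _ ⟨x, hx, rfl⟩
        by_cases hx2 : x ≤ 1/2
        · refine ⟨x/2, ⟨by linarith [hx.1], by linarith⟩, ?_⟩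
          rw [hb1 (x/2) (by linarith)]
          congr 1; ring
        · refine ⟨(x+1)/2, ⟨by linarith [hx.1], by linarith [hx.2]⟩, ?_⟩
          rw [hb3 ((x+1)/2) (by linarith)]
          congr 1; ring
      have hne : (hA '' Set.Icc (2*s) (2*t - 1)).Nonempty :=
        ⟨hA (2*s), ⟨2*s, ⟨le_rfl, by linarith⟩, rfl⟩⟩
      have hinf := csInf_le_csInf bdd hne hsub
      calc ‖(Γ₂ 1 - Γ₂' 1 + Γ₂' 0 - Γ₂ 0) + A (2*t - 1) - A (2*s)‖
          ≤ ‖B 1 - B 0‖ + ‖A (2*t - 1) - A (2*s)‖ := by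
            rw [dec]; exact norm_add_le _ _
        _ ≤ _ := by linarith
  · by_cases c3 : t ≤ 3/4
    · -- Case 4 : 1/4 < s ≤ t ≤ 3/4
      rw [Xeq2 Γ₁ Γ₂ Γ₁' Γ₂' (by linarith) c3, Xeq2 Γ₁ Γ₂ Γ₁' Γ₂' (by linarith) (hst.trans c3),
        ← hBdef, hb2 s (by linarith) (hst.trans c3), hb2 t (by linarith) c3]
      have dec : Γ₁ 1 - Γ₂ 0 + B (2*t - 1/2) - (Γ₁ 1 - Γ₂ 0 + B (2*s - 1/2))
          = B (2*t - 1/2) - B (2*s - 1/2) := by abel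
      have hPB := PB (2*s - 1/2) (2*t - 1/2) (by linarith) (by linarith) (by linarith)
      have hne : (hB '' Set.Icc (2*s - 1/2) (2*t - 1/2)).Nonempty :=
        ⟨hB (2*s - 1/2), ⟨2*s - 1/2, ⟨le_rfl, by linarith⟩, rfl⟩⟩
      have key : sInf (hh '' Set.Icc s t) - hA (1/2)
          ≤ sInf (hB '' Set.Icc (2*s - 1/2) (2*t - 1/2)) := by
        apply le_csInf hne
        rintro _ ⟨x, hx, rfl⟩
        have hmem : (x/2 + 1/4) ∈ Set.Icc s t :=
          ⟨by linarith [hx.1], by linarith [hx.2]⟩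
        have hle : sInf (hh '' Set.Icc s t) ≤ hh (x/2 + 1/4) :=
          csInf_le bdd ⟨_, hmem, rfl⟩
        rw [hb2 (x/2 + 1/4) (by linarith [hx.1]) (by linarith [hx.2])] at hle
        have harg : 2*(x/2 + 1/4) - 1/2 = x := by ring
        rw [harg] at hle
        linarith
      calc ‖Γ₁ 1 - Γ₂ 0 + B (2*t - 1/2) - (Γ₁ 1 - Γ₂ 0 + B (2*s - 1/2))‖
          = ‖B (2*t - 1/2) - B (2*s - 1/2)‖ := by rw [dec]
        _ ≤ _ := by linarith
    · by_cases c4 : s ≤ 3/4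
      · -- Case 5 : 1/4 < s ≤ 3/4 < t
        rw [Xeq3 Γ₁ Γ₂ Γ₁' Γ₂' (by linarith), Xeq2 Γ₁ Γ₂ Γ₁' Γ₂' (by linarith) c4,
          ← hAdef, ← hBdef, hb2 s (by linarith) c4, hb3 t (by linarith)]
        have dec : (Γ₂ 1 - Γ₂' 1 + Γ₂' 0 - Γ₂ 0) + A (2*t - 1)
              - (Γ₁ 1 - Γ₂ 0 + B (2*s - 1/2))
            = (A (2*t - 1) - A (1/2)) + (B 1 - B (2*s - 1/2)) := by
          rw [eA, eB1]; abel
        have hPA := PA (1/2) (2*t - 1) (by norm_num) (by linarith) (by linarith)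
        have hPB := PB (2*s - 1/2) 1 (by linarith) (by linarith) le_rfl
        have iBnn : 0 ≤ sInf (hB '' Set.Icc (2*s - 1/2) 1) := by
          apply Real.sInf_nonneg
          rintro _ ⟨x, hx, rfl⟩
          exact hBnn x ⟨by linarith [hx.1], hx.2⟩
        have hsub : hA '' Set.Icc (1/2) (2*t - 1) ⊆ hh '' Set.Icc s t := by
          rintro _ ⟨x, hx, rfl⟩
          refine ⟨(x+1)/2, ⟨by linarith [hx.1], by linarith [hx.2]⟩, ?_⟩
          rw [hb3 ((x+1)/2) (by linarith [hx.1])]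
          congr 1; ring
        have hne : (hA '' Set.Icc (1/2) (2*t - 1)).Nonempty :=
          ⟨hA (1/2), ⟨1/2, ⟨le_rfl, by linarith⟩, rfl⟩⟩
        have hinf := csInf_le_csInf bdd hne hsub
        calc ‖(Γ₂ 1 - Γ₂' 1 + Γ₂' 0 - Γ₂ 0) + A (2*t - 1)
              - (Γ₁ 1 - Γ₂ 0 + B (2*s - 1/2))‖
            ≤ ‖A (2*t - 1) - A (1/2)‖ + ‖B 1 - B (2*s - 1/2)‖ := by
              rw [dec]; exact norm_add_le _ _
          _ ≤ _ := by linarith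
      · -- Case 6 : 3/4 < s ≤ t
        rw [Xeq3 Γ₁ Γ₂ Γ₁' Γ₂' (by linarith), Xeq3 Γ₁ Γ₂ Γ₁' Γ₂' (by linarith),
          ← hAdef, hb3 s (by linarith), hb3 t (by linarith)]
        have dec : (Γ₂ 1 - Γ₂' 1 + Γ₂' 0 - Γ₂ 0) + A (2*t - 1)
              - ((Γ₂ 1 - Γ₂' 1 + Γ₂' 0 - Γ₂ 0) + A (2*s - 1))
            = A (2*t - 1) - A (2*s - 1) := by abel
        have hPA := PA (2*s - 1) (2*t - 1) (by linarith) (by linarith) (by linarith)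
        have hsub : hA '' Set.Icc (2*s - 1) (2*t - 1) ⊆ hh '' Set.Icc s t := by
          rintro _ ⟨x, hx, rfl⟩
          refine ⟨(x+1)/2, ⟨by linarith [hx.1], by linarith [hx.2]⟩, ?_⟩
          rw [hb3 ((x+1)/2) (by linarith [hx.1])]
          congr 1; ring
        have hne : (hA '' Set.Icc (2*s - 1) (2*t - 1)).Nonempty :=
          ⟨hA (2*s - 1), ⟨2*s - 1, ⟨le_rfl, by linarith⟩, rfl⟩⟩
        have hinf := csInf_le_csInf bdd hne hsub
        calc ‖(Γ₂ 1 - Γ₂' 1 + Γ₂' 0 - Γ₂ 0) + A (2*t - 1)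
              - ((Γ₂ 1 - Γ₂' 1 + Γ₂' 0 - Γ₂ 0) + A (2*s - 1))‖
            = ‖A (2*t - 1) - A (2*s - 1)‖ := by rw [dec]
          _ ≤ _ := by linarith
end
end

section
/- Reductions preserve tree-like equivalence class: for all Lipschitz paths α, γ, β : [0,1] → ℝ^N, the path α * (γ * γ⁻¹) * β is tree-like equivalent to α * β. -/
noncomputable section

open Set

namespace RedAux


/-- Cumulative variation of `f` on `[0,1]` from `0` to `u`. -/
def vf {N : ℕ} (f : ℝ → EuclideanSpace ℝ (Fin N)) (u : ℝ) : ℝ :=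
  variationOnFromTo f (Set.Icc 0 1) 0 u

variable {N : ℕ} {f : ℝ → EuclideanSpace ℝ (Fin N)} {K : NNReal}

lemma vf_zero : vf f 0 = 0 := variationOnFromTo.self f _ 0

lemma vf_nonneg {u : ℝ} (hu : 0 ≤ u) : 0 ≤ vf f u :=
  variationOnFromTo.nonneg_of_le f _ hu

lemma vf_diff (hf : LipschitzOnWith K f (Set.Icc 0 1)) {u v : ℝ}
    (h0 : 0 ≤ u) (huv : u ≤ v) (h1 : v ≤ 1) :
    vf f v - vf f u = variationOnFromTo f (Set.Icc 0 1) u v := by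
  have hloc := hf.locallyBoundedVariationOn
  have hu : u ∈ Set.Icc (0:ℝ) 1 := ⟨h0, huv.trans h1⟩
  have hv : v ∈ Set.Icc (0:ℝ) 1 := ⟨h0.trans huv, h1⟩
  have h00 : (0:ℝ) ∈ Set.Icc (0:ℝ) 1 := ⟨le_refl _, zero_le_one⟩
  have := variationOnFromTo.add hloc h00 hu hv
  simp only [vf]
  linarith

lemma vf_mono (hf : LipschitzOnWith K f (Set.Icc 0 1)) {u v : ℝ}
    (h0 : 0 ≤ u) (huv : u ≤ v) (h1 : v ≤ 1) : vf f u ≤ vf f v := by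
  have := vf_diff hf h0 huv h1
  have h2 := variationOnFromTo.nonneg_of_le f (Set.Icc (0:ℝ) 1) huv
  linarith

lemma norm_sub_le_vf (hf : LipschitzOnWith K f (Set.Icc 0 1)) {u v : ℝ}
    (h0 : 0 ≤ u) (huv : u ≤ v) (h1 : v ≤ 1) :
    ‖f v - f u‖ ≤ vf f v - vf f u := by
  rw [vf_diff hf h0 huv h1, variationOnFromTo.eq_of_le f _ huv]
  have hbv : BoundedVariationOn f (Set.Icc 0 1 ∩ Set.Icc u v) :=
    hf.locallyBoundedVariationOn u v ⟨h0, huv.trans h1⟩ ⟨h0.trans huv, h1⟩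
  have hu : u ∈ Set.Icc (0:ℝ) 1 ∩ Set.Icc u v := ⟨⟨h0, huv.trans h1⟩, le_refl _, huv⟩
  have hv : v ∈ Set.Icc (0:ℝ) 1 ∩ Set.Icc u v := ⟨⟨h0.trans huv, h1⟩, huv, le_refl _⟩
  have := hbv.dist_le hv hu
  rwa [dist_eq_norm] at this

lemma vf_lip (hf : LipschitzOnWith K f (Set.Icc 0 1)) {u v : ℝ}
    (h0 : 0 ≤ u) (huv : u ≤ v) (h1 : v ≤ 1) :
    vf f v - vf f u ≤ (K : ℝ) * (v - u) := by
  rw [vf_diff hf h0 huv h1, variationOnFromTo.eq_of_le f _ huv]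
  have hsub : Set.Icc u v ⊆ Set.Icc (0:ℝ) 1 := Set.Icc_subset_Icc h0 h1
  have hinter : Set.Icc (0:ℝ) 1 ∩ Set.Icc u v = Set.Icc u v :=
    Set.inter_eq_self_of_subset_right hsub
  rw [hinter]
  have hid : eVariationOn (fun x : ℝ => x) (Set.Icc u v) ≤ ENNReal.ofReal (v - u) := by
    have := (monotoneOn_id (s := Set.Icc u v)).eVariationOn_le
      (a := u) (b := v) ⟨le_refl _, huv⟩ ⟨huv, le_refl _⟩
    rw [Set.inter_self] at this
    exact this
  have hcomp : eVariationOn f (Set.Icc u v) ≤ (K : ENNReal) * ENNReal.ofReal (v - u) := by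
    have := hf.comp_eVariationOn_le (g := fun x : ℝ => x) (s := Set.Icc u v)
      (fun x hx => hsub hx)
    exact le_trans (by exact this) (mul_le_mul_right hid _)
  calc (eVariationOn f (Set.Icc u v)).toReal
      ≤ ((K : ENNReal) * ENNReal.ofReal (v - u)).toReal := by
        apply ENNReal.toReal_mono _ hcomp
        exact ENNReal.mul_ne_top ENNReal.coe_ne_top ENNReal.ofReal_ne_top
    _ = (K : ℝ) * (v - u) := by
        rw [ENNReal.toReal_mul, ENNReal.coe_toReal, ENNReal.toReal_ofReal (by linarith)]

lemma vf_abs_le (hf : LipschitzOnWith K f (Set.Icc 0 1)) {u v : ℝ}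
    (hu0 : 0 ≤ u) (hu1 : u ≤ 1) (hv0 : 0 ≤ v) (hv1 : v ≤ 1) :
    |vf f v - vf f u| ≤ (K : ℝ) * |v - u| := by
  rcases le_total u v with h | h
  · rw [abs_of_nonneg (by linarith [vf_mono hf hu0 h hv1]), abs_of_nonneg (by linarith)]
    exact vf_lip hf hu0 h hv1
  · rw [abs_of_nonpos (by linarith [vf_mono hf hv0 h hu1]), abs_of_nonpos (by linarith)]
    have := vf_lip hf hv0 h hu1
    linarith

lemma norm_sub_le_abs_vf (hf : LipschitzOnWith K f (Set.Icc 0 1)) {u v : ℝ}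
    (hu0 : 0 ≤ u) (hu1 : u ≤ 1) (hv0 : 0 ≤ v) (hv1 : v ≤ 1) :
    ‖f v - f u‖ ≤ |vf f v - vf f u| := by
  rcases le_total u v with h | h
  · exact le_trans (norm_sub_le_vf hf hu0 h hv1) (le_abs_self _)
  · rw [norm_sub_rev]
    calc ‖f u - f v‖ ≤ vf f u - vf f v := norm_sub_le_vf hf hv0 h hu1
      _ ≤ |vf f u - vf f v| := le_abs_self _
      _ = |vf f v - vf f u| := abs_sub_comm _ _

/-- Gluing Lipschitz bounds on adjacent intervals (real-valued). -/
lemma lip_glue {g : ℝ → ℝ} {M a b c : ℝ} (hM : 0 ≤ M) (hab : a ≤ b) (hbc : b ≤ c)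
    (h1 : ∀ x ∈ Set.Icc a b, ∀ y ∈ Set.Icc a b, |g y - g x| ≤ M * |y - x|)
    (h2 : ∀ x ∈ Set.Icc b c, ∀ y ∈ Set.Icc b c, |g y - g x| ≤ M * |y - x|) :
    ∀ x ∈ Set.Icc a c, ∀ y ∈ Set.Icc a c, |g y - g x| ≤ M * |y - x| := by
  have key : ∀ x ∈ Set.Icc a c, ∀ y ∈ Set.Icc a c, x ≤ y → |g y - g x| ≤ M * |y - x| := by
    intro x hx y hy hxy
    rcases le_total y b with hyb | hby
    · exact h1 x ⟨hx.1, hxy.trans hyb⟩ y ⟨hy.1, hyb⟩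
    · rcases le_total b x with hbx | hxb
      · exact h2 x ⟨hbx, hxy.trans hy.2⟩ y ⟨hbx.trans hxy, hy.2⟩
      · have e1 := h1 x ⟨hx.1, hxb⟩ b ⟨hab, le_refl _⟩
        have e2 := h2 b ⟨le_refl _, hbc⟩ y ⟨hby, hy.2⟩
        calc |g y - g x| ≤ |g y - g b| + |g b - g x| := abs_sub_le _ _ _
          _ ≤ M * |b - x| + M * |y - b| := by
              linarith
          _ ≤ M * |y - x| := by
              rw [abs_of_nonneg (by linarith), abs_of_nonneg (by linarith),
                abs_of_nonneg (by linarith)]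
              nlinarith
  intro x hx y hy
  rcases le_total x y with h | h
  · exact key x hx y hy h
  · rw [abs_sub_comm, abs_sub_comm y x]
    exact key y hy x hx h



variable {N : ℕ} (α γ β : ℝ → EuclideanSpace ℝ (Fin N))

lemma concat_left (f g : ℝ → EuclideanSpace ℝ (Fin N)) {t : ℝ} (h : t < 1/2) :
    concat f g t = f (2*t) := if_pos h

lemma concat_right (f g : ℝ → EuclideanSpace ℝ (Fin N)) {t : ℝ} (h : 1/2 ≤ t) :
    concat f g t = f 1 - g 0 + g (2*t - 1) := if_neg (not_lt.2 h)

lemma pathInv_app (f : ℝ → EuclideanSpace ℝ (Fin N)) (t : ℝ) : pathInv f t = f (1-t) := rfl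

lemma B_zero : concat γ (pathInv γ) 0 = γ 0 := by
  rw [concat_left _ _ (by norm_num)]; norm_num

lemma A_one : concat α (concat γ (pathInv γ)) 1 = α 1 := by
  rw [concat_right _ _ (by norm_num), B_zero,
    concat_right _ _ (by norm_num), pathInv_app, pathInv_app]
  norm_num

lemma G1_one : concat (concat α (concat γ (pathInv γ))) β 1 = α 1 - β 0 + β 1 := by
  rw [concat_right _ _ (by norm_num), A_one]; norm_num

lemma G2_one : concat α β 1 = α 1 - β 0 + β 1 := by
  rw [concat_right _ _ (by norm_num)]; norm_num

/-- The reduction word `α (γ γ⁻¹) β (α β)⁻¹`. -/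
def W : ℝ → EuclideanSpace ℝ (Fin N) :=
  concat (concat (concat α (concat γ (pathInv γ))) β) (pathInv (concat α β))

/-- Height function for the tree. -/
def hfun (t : ℝ) : ℝ :=
  if t < 1/8 then vf α (8*t)
  else if t < 3/16 then vf α 1 + vf γ (16*t - 2)
  else if t < 1/4 then vf α 1 + vf γ (4 - 16*t)
  else if t < 1/2 then vf α 1 + vf β (4*t - 1)
  else if t < 3/4 then vf α 1 + vf β (3 - 4*t)
  else vf α (4 - 4*t)

lemma hfun_eq1 {t : ℝ} (h1 : t ≤ 1/8) : hfun α γ β t = vf α (8*t) := by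
  rcases lt_or_eq_of_le h1 with h | h
  · rw [hfun, if_pos h]
  · subst h; norm_num [hfun, vf_zero]

lemma hfun_eq2 {t : ℝ} (h0 : 1/8 ≤ t) (h1 : t ≤ 3/16) :
    hfun α γ β t = vf α 1 + vf γ (16*t - 2) := by
  rcases lt_or_eq_of_le h1 with h | h
  · rw [hfun, if_neg (by linarith), if_pos h]
  · subst h; norm_num [hfun]

lemma hfun_eq3 {t : ℝ} (h0 : 3/16 ≤ t) (h1 : t ≤ 1/4) :
    hfun α γ β t = vf α 1 + vf γ (4 - 16*t) := by
  rcases lt_or_eq_of_le h1 with h | h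
  · rw [hfun, if_neg (by linarith), if_neg (by linarith), if_pos h]
  · subst h; norm_num [hfun, vf_zero]

lemma hfun_eq4 {t : ℝ} (h0 : 1/4 ≤ t) (h1 : t ≤ 1/2) :
    hfun α γ β t = vf α 1 + vf β (4*t - 1) := by
  rcases lt_or_eq_of_le h1 with h | h
  · rw [hfun, if_neg (by linarith), if_neg (by linarith), if_neg (by linarith), if_pos h]
  · subst h; norm_num [hfun]

lemma hfun_eq5 {t : ℝ} (h0 : 1/2 ≤ t) (h1 : t ≤ 3/4) :
    hfun α γ β t = vf α 1 + vf β (3 - 4*t) := by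
  rcases lt_or_eq_of_le h1 with h | h
  · rw [hfun, if_neg (by linarith), if_neg (by linarith), if_neg (by linarith),
      if_neg (by linarith), if_pos h]
  · subst h; norm_num [hfun, vf_zero]

lemma hfun_eq6 {t : ℝ} (h0 : 3/4 ≤ t) : hfun α γ β t = vf α (4 - 4*t) := by
  rw [hfun, if_neg (by linarith), if_neg (by linarith), if_neg (by linarith),
    if_neg (by linarith), if_neg (by linarith)]

lemma cover (t : ℝ) (h0 : 0 ≤ t) (h1 : t ≤ 1) :
    (∃ u, 0 ≤ u ∧ u ≤ 1 ∧ W α γ β t = α u ∧ hfun α γ β t = vf α u) ∨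
    (1/8 ≤ t ∧ t ≤ 1/4 ∧ ∃ u, 0 ≤ u ∧ u ≤ 1 ∧
      W α γ β t = α 1 - γ 0 + γ u ∧ hfun α γ β t = vf α 1 + vf γ u) ∨
    (1/4 ≤ t ∧ t ≤ 3/4 ∧ ∃ u, 0 ≤ u ∧ u ≤ 1 ∧
      W α γ β t = α 1 - β 0 + β u ∧ hfun α γ β t = vf α 1 + vf β u) := by
  rcases lt_or_ge t (1/8 : ℝ) with c1 | c1
  · left
    refine ⟨8*t, by linarith, by linarith, ?_, hfun_eq1 α γ β c1.le⟩
    rw [W, concat_left _ _ (by linarith : t < 1/2),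
      concat_left _ _ (by linarith : 2*t < 1/2),
      concat_left _ _ (by linarith : 2*(2*t) < 1/2)]
    congr 1; ring
  · rcases lt_or_ge t (3/16 : ℝ) with c2 | c2
    · right; left
      refine ⟨c1, by linarith, 16*t - 2, by linarith, by linarith, ?_,
        hfun_eq2 α γ β c1 c2.le⟩
      rw [W, concat_left _ _ (by linarith : t < 1/2),
        concat_left _ _ (by linarith : 2*t < 1/2),
        concat_right _ _ (by linarith : 1/2 ≤ 2*(2*t)), B_zero,
        concat_left _ _ (by linarith : 2*(2*(2*t)) - 1 < 1/2)]
      congr 1; ring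
    · rcases lt_or_ge t (1/4 : ℝ) with c3 | c3
      · right; left
        refine ⟨by linarith, c3.le, 4 - 16*t, by linarith, by linarith, ?_,
          hfun_eq3 α γ β c2 c3.le⟩
        rw [W, concat_left _ _ (by linarith : t < 1/2),
          concat_left _ _ (by linarith : 2*t < 1/2),
          concat_right _ _ (by linarith : 1/2 ≤ 2*(2*t)), B_zero,
          concat_right _ _ (by linarith : 1/2 ≤ 2*(2*(2*t)) - 1),
          pathInv_app, pathInv_app]
        have e1 : (1:ℝ) - 0 = 1 := by norm_num
        rw [e1, sub_self, zero_add]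
        congr 1; ring
      · rcases lt_or_ge t (1/2 : ℝ) with c4 | c4
        · right; right
          refine ⟨c3, by linarith, 4*t - 1, by linarith, by linarith, ?_,
            hfun_eq4 α γ β c3 c4.le⟩
          rw [W, concat_left _ _ (by linarith : t < 1/2),
            concat_right _ _ (by linarith : 1/2 ≤ 2*t), A_one]
          congr 1; ring
        · -- second half : W t = (concat α β) (2 - 2t)
          have base : W α γ β t = concat α β (1 - (2*t - 1)) := by
            rw [W, concat_right _ _ (by linarith : 1/2 ≤ t), G1_one,
              pathInv_app, pathInv_app]
            have e1 : (1:ℝ) - 0 = 1 := by norm_num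
            rw [e1, G2_one, sub_self, zero_add]
          rcases lt_or_ge t (3/4 : ℝ) with c5 | c5
          · right; right
            refine ⟨by linarith, by linarith, 3 - 4*t, by linarith, by linarith, ?_,
              hfun_eq5 α γ β c4 c5.le⟩
            rw [base, concat_right _ _ (by linarith : 1/2 ≤ 1 - (2*t - 1))]
            congr 1; ring
          · left
            refine ⟨4 - 4*t, by linarith, by linarith, ?_, hfun_eq6 α γ β c5⟩
            rcases eq_or_lt_of_le c5 with c6 | c6
            · rw [base, concat_right _ _ (by rw [← c6]; norm_num)]
              rw [← c6]
              norm_num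
            · rw [base, concat_left _ _ (by linarith : 1 - (2*t - 1) < 1/2)]
              congr 1; ring


lemma hfun_nonneg (t : ℝ) (h0 : 0 ≤ t) (h1 : t ≤ 1) : 0 ≤ hfun α γ β t := by
  have a0 : (0:ℝ) ≤ vf α 1 := vf_nonneg zero_le_one
  rw [hfun]
  split_ifs with c1 c2 c3 c4 c5
  · exact vf_nonneg (by linarith)
  · exact add_nonneg a0 (vf_nonneg (by linarith))
  · exact add_nonneg a0 (vf_nonneg (by linarith))
  · exact add_nonneg a0 (vf_nonneg (by linarith))
  · exact add_nonneg a0 (vf_nonneg (by linarith))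
  · exact vf_nonneg (by linarith)

lemma hfun_zero : hfun α γ β 0 = 0 := by
  rw [hfun_eq1 α γ β (by norm_num)]
  norm_num [vf_zero]

lemma hfun_one : hfun α γ β 1 = 0 := by
  rw [hfun_eq6 α γ β (by norm_num)]
  norm_num [vf_zero]

lemma hfun_quarter : hfun α γ β (1/4) = vf α 1 := by
  rw [hfun_eq4 α γ β (by norm_num) (by norm_num)]
  norm_num [vf_zero]

lemma piece_bound {K : NNReal} {f : ℝ → EuclideanSpace ℝ (Fin N)}
    (hf : LipschitzOnWith K f (Set.Icc 0 1)) {u v x y : ℝ}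
    (hu0 : 0 ≤ u) (hu1 : u ≤ 1) (hv0 : 0 ≤ v) (hv1 : v ≤ 1)
    (harg : |v - u| ≤ 16 * |y - x|) :
    |vf f v - vf f u| ≤ (16*(K:ℝ)) * |y - x| := by
  have h1 := vf_abs_le hf hu0 hu1 hv0 hv1
  nlinarith [abs_nonneg (y - x), K.coe_nonneg, abs_nonneg (v - u)]

lemma hfun_lip {Ka Kc Kb : NNReal} (ha : LipschitzOnWith Ka α (Set.Icc 0 1))
    (hc : LipschitzOnWith Kc γ (Set.Icc 0 1)) (hb : LipschitzOnWith Kb β (Set.Icc 0 1)) :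
    ∀ x ∈ Set.Icc (0:ℝ) 1, ∀ y ∈ Set.Icc (0:ℝ) 1,
      |hfun α γ β y - hfun α γ β x| ≤ (16*((Ka:ℝ) + (Kc:ℝ) + (Kb:ℝ))) * |y - x| := by
  set M : ℝ := 16*((Ka:ℝ) + (Kc:ℝ) + (Kb:ℝ)) with hMdef
  have hM0 : 0 ≤ M := by positivity
  have hKa : (16:ℝ)*(Ka:ℝ) ≤ M := by
    have := Kc.coe_nonneg; have := Kb.coe_nonneg; rw [hMdef]; nlinarith
  have hKc : (16:ℝ)*(Kc:ℝ) ≤ M := by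
    have := Ka.coe_nonneg; have := Kb.coe_nonneg; rw [hMdef]; nlinarith
  have hKb : (16:ℝ)*(Kb:ℝ) ≤ M := by
    have := Ka.coe_nonneg; have := Kc.coe_nonneg; rw [hMdef]; nlinarith
  have weaken : ∀ (c : ℝ), 16*c ≤ M → ∀ x y z : ℝ, |z| ≤ 16*c*|y-x| → |z| ≤ M * |y-x| := by
    intro c hcM x y z hz
    have := abs_nonneg (y - x)
    nlinarith
  have p1 : ∀ x ∈ Set.Icc (0:ℝ) (1/8), ∀ y ∈ Set.Icc (0:ℝ) (1/8),
      |hfun α γ β y - hfun α γ β x| ≤ M * |y - x| := by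
    intro x hx y hy
    rw [hfun_eq1 α γ β hx.2, hfun_eq1 α γ β hy.2]
    refine weaken _ hKa x y _ (piece_bound ha (by linarith [hx.1]) (by linarith [hx.2])
      (by linarith [hy.1]) (by linarith [hy.2]) ?_)
    rw [show (8*y:ℝ) - 8*x = 8*(y-x) by ring, abs_mul]
    have := abs_nonneg (y - x); norm_num; nlinarith
  have p2 : ∀ x ∈ Set.Icc (1/8:ℝ) (3/16), ∀ y ∈ Set.Icc (1/8:ℝ) (3/16),
      |hfun α γ β y - hfun α γ β x| ≤ M * |y - x| := by
    intro x hx y hy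
    rw [hfun_eq2 α γ β hx.1 hx.2, hfun_eq2 α γ β hy.1 hy.2, add_sub_add_left_eq_sub]
    refine weaken _ hKc x y _ (piece_bound hc (by linarith [hx.1]) (by linarith [hx.2])
      (by linarith [hy.1]) (by linarith [hy.2]) ?_)
    rw [show (16*y - 2:ℝ) - (16*x - 2) = 16*(y-x) by ring, abs_mul]
    norm_num
  have p3 : ∀ x ∈ Set.Icc (3/16:ℝ) (1/4), ∀ y ∈ Set.Icc (3/16:ℝ) (1/4),
      |hfun α γ β y - hfun α γ β x| ≤ M * |y - x| := by
    intro x hx y hy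
    rw [hfun_eq3 α γ β hx.1 hx.2, hfun_eq3 α γ β hy.1 hy.2, add_sub_add_left_eq_sub]
    refine weaken _ hKc x y _ (piece_bound hc (by linarith [hx.2]) (by linarith [hx.1])
      (by linarith [hy.2]) (by linarith [hy.1]) ?_)
    rw [show (4 - 16*y:ℝ) - (4 - 16*x) = 16*(x-y) by ring, abs_mul, abs_sub_comm x y]
    norm_num
  have p4 : ∀ x ∈ Set.Icc (1/4:ℝ) (1/2), ∀ y ∈ Set.Icc (1/4:ℝ) (1/2),
      |hfun α γ β y - hfun α γ β x| ≤ M * |y - x| := by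
    intro x hx y hy
    rw [hfun_eq4 α γ β hx.1 hx.2, hfun_eq4 α γ β hy.1 hy.2, add_sub_add_left_eq_sub]
    refine weaken _ hKb x y _ (piece_bound hb (by linarith [hx.1]) (by linarith [hx.2])
      (by linarith [hy.1]) (by linarith [hy.2]) ?_)
    rw [show (4*y - 1:ℝ) - (4*x - 1) = 4*(y-x) by ring, abs_mul]
    have := abs_nonneg (y - x); norm_num; nlinarith
  have p5 : ∀ x ∈ Set.Icc (1/2:ℝ) (3/4), ∀ y ∈ Set.Icc (1/2:ℝ) (3/4),
      |hfun α γ β y - hfun α γ β x| ≤ M * |y - x| := by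
    intro x hx y hy
    rw [hfun_eq5 α γ β hx.1 hx.2, hfun_eq5 α γ β hy.1 hy.2, add_sub_add_left_eq_sub]
    refine weaken _ hKb x y _ (piece_bound hb (by linarith [hx.2]) (by linarith [hx.1])
      (by linarith [hy.2]) (by linarith [hy.1]) ?_)
    rw [show (3 - 4*y:ℝ) - (3 - 4*x) = 4*(x-y) by ring, abs_mul, abs_sub_comm x y]
    have := abs_nonneg (y - x); norm_num; nlinarith
  have p6 : ∀ x ∈ Set.Icc (3/4:ℝ) 1, ∀ y ∈ Set.Icc (3/4:ℝ) 1,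
      |hfun α γ β y - hfun α γ β x| ≤ M * |y - x| := by
    intro x hx y hy
    rw [hfun_eq6 α γ β hx.1, hfun_eq6 α γ β hy.1]
    refine weaken _ hKa x y _ (piece_bound ha (by linarith [hx.2]) (by linarith [hx.1])
      (by linarith [hy.2]) (by linarith [hy.1]) ?_)
    rw [show (4 - 4*y:ℝ) - (4 - 4*x) = 4*(x-y) by ring, abs_mul, abs_sub_comm x y]
    have := abs_nonneg (y - x); norm_num; nlinarith
  have q5 := lip_glue hM0 (by norm_num : (1/2:ℝ) ≤ 3/4) (by norm_num : (3/4:ℝ) ≤ 1) p5 p6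
  have q4 := lip_glue hM0 (by norm_num : (1/4:ℝ) ≤ 1/2) (by norm_num : (1/2:ℝ) ≤ 1) p4 q5
  have q3 := lip_glue hM0 (by norm_num : (3/16:ℝ) ≤ 1/4) (by norm_num : (1/4:ℝ) ≤ 1) p3 q4
  have q2 := lip_glue hM0 (by norm_num : (1/8:ℝ) ≤ 3/16) (by norm_num : (3/16:ℝ) ≤ 1) p2 q3
  exact lip_glue hM0 (by norm_num : (0:ℝ) ≤ 1/8) (by norm_num : (1/8:ℝ) ≤ 1) p1 q2

end RedAux

open RedAux in
/-- Reductions preserve tree-like equivalence class: for all Lipschitz paths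
`α, γ, β : [0,1] → ℝ^N`, the path `α * (γ * γ⁻¹) * β` is tree-like equivalent to `α * β`. -/
theorem reduction_treeLikeEquiv {N : ℕ}
    (α γ β : ℝ → EuclideanSpace ℝ (Fin N))
    (hα : IsLipPath α) (hγ : IsLipPath γ) (hβ : IsLipPath β) :
    TreeLikeEquiv (concat (concat α (concat γ (pathInv γ))) β) (concat α β) := by
  obtain ⟨Ka, hKa⟩ := hα
  obtain ⟨Kc, hKc⟩ := hγ
  obtain ⟨Kb, hKb⟩ := hβ
  show LipschitzTreeLike (W α γ β)
  have hlip : LipschitzOnWith (Real.toNNReal (16*((Ka:ℝ) + (Kc:ℝ) + (Kb:ℝ))))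
      (hfun α γ β) (Set.Icc 0 1) := by
    rw [lipschitzOnWith_iff_dist_le_mul]
    intro x hx y hy
    rw [Real.dist_eq, Real.dist_eq, Real.coe_toNNReal _ (by positivity)]
    exact hfun_lip α γ β hKa hKc hKb y hy x hx
  refine ⟨hfun α γ β, hlip.continuousOn, fun t ht => hfun_nonneg α γ β t ht.1 ht.2, ?_,
    hfun_zero α γ β, hfun_one α γ β, ?_⟩
  · have := hlip.locallyBoundedVariationOn 0 1 ⟨le_refl _, zero_le_one⟩ ⟨zero_le_one, le_refl _⟩
    rwa [Set.inter_self] at this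
  · intro s t hs hst ht1
    set m := sInf (hfun α γ β '' Set.Icc s t) with hmdef
    have hsub : Set.Icc s t ⊆ Set.Icc (0:ℝ) 1 := Set.Icc_subset_Icc hs ht1
    have hbdd : BddBelow (hfun α γ β '' Set.Icc s t) := by
      refine ⟨0, fun z hz => ?_⟩
      obtain ⟨x, hx, rfl⟩ := hz
      exact hfun_nonneg α γ β x (hsub hx).1 (hsub hx).2
    have hmle : ∀ x, s ≤ x → x ≤ t → m ≤ hfun α γ β x := fun x h1 h2 =>
      csInf_le hbdd ⟨x, ⟨h1, h2⟩, rfl⟩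
    have hms : m ≤ hfun α γ β s := hmle s (le_refl _) hst
    have hmt : m ≤ hfun α γ β t := hmle t hst (le_refl _)
    have ha0 : (0:ℝ) ≤ vf α 1 := vf_nonneg zero_le_one
    rcases cover α γ β s hs (hst.trans ht1) with
        ⟨u, hu0, hu1, es, hhs⟩ | ⟨hsl, hsr, u, hu0, hu1, es, hhs⟩ |
        ⟨hsl, hsr, u, hu0, hu1, es, hhs⟩ <;>
      rcases cover α γ β t (hs.trans hst) ht1 with
        ⟨v, hv0, hv1, et, hht⟩ | ⟨htl, htr, v, hv0, hv1, et, hht⟩ |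
        ⟨htl, htr, v, hv0, hv1, et, hht⟩ <;>
      rw [hhs] at hms <;> rw [hht] at hmt <;> rw [es, et, hhs, hht]
    -- case AA
    · have key : ‖α v - α u‖ ≤ |vf α v - vf α u| :=
        norm_sub_le_abs_vf hKa hu0 hu1 hv0 hv1
      rcases abs_cases (vf α v - vf α u) with ⟨he, _⟩ | ⟨he, _⟩ <;> linarith
    -- case AG
    · have e : (α 1 - γ 0 + γ v) - α u = (α 1 - α u) + (γ v - γ 0) := by abel
      have b1 : ‖α 1 - α u‖ ≤ vf α 1 - vf α u := norm_sub_le_vf hKa hu0 hu1 (le_refl _)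
      have b2 : ‖γ v - γ 0‖ ≤ vf γ v - vf γ 0 := norm_sub_le_vf hKc (le_refl _) hv0 hv1
      have hz : vf γ 0 = 0 := vf_zero
      calc ‖(α 1 - γ 0 + γ v) - α u‖ ≤ ‖α 1 - α u‖ + ‖γ v - γ 0‖ := by
            rw [e]; exact norm_add_le _ _
        _ ≤ vf α u + (vf α 1 + vf γ v) - 2*m := by linarith
    -- case AB
    · have e : (α 1 - β 0 + β v) - α u = (α 1 - α u) + (β v - β 0) := by abel
      have b1 : ‖α 1 - α u‖ ≤ vf α 1 - vf α u := norm_sub_le_vf hKa hu0 hu1 (le_refl _)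
      have b2 : ‖β v - β 0‖ ≤ vf β v - vf β 0 := norm_sub_le_vf hKb (le_refl _) hv0 hv1
      have hz : vf β 0 = 0 := vf_zero
      calc ‖(α 1 - β 0 + β v) - α u‖ ≤ ‖α 1 - α u‖ + ‖β v - β 0‖ := by
            rw [e]; exact norm_add_le _ _
        _ ≤ vf α u + (vf α 1 + vf β v) - 2*m := by linarith
    -- case GA
    · have e : α v - (α 1 - γ 0 + γ u) = (α v - α 1) + (γ 0 - γ u) := by abel
      have b1 : ‖α v - α 1‖ ≤ vf α 1 - vf α v := by
        rw [norm_sub_rev]; exact norm_sub_le_vf hKa hv0 hv1 (le_refl _)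
      have b2 : ‖γ 0 - γ u‖ ≤ vf γ u - vf γ 0 := by
        rw [norm_sub_rev]; exact norm_sub_le_vf hKc (le_refl _) hu0 hu1
      have hz : vf γ 0 = 0 := vf_zero
      calc ‖α v - (α 1 - γ 0 + γ u)‖ ≤ ‖α v - α 1‖ + ‖γ 0 - γ u‖ := by
            rw [e]; exact norm_add_le _ _
        _ ≤ (vf α 1 + vf γ u) + vf α v - 2*m := by linarith
    -- case GG
    · have e : (α 1 - γ 0 + γ v) - (α 1 - γ 0 + γ u) = γ v - γ u := by abel
      have key : ‖γ v - γ u‖ ≤ |vf γ v - vf γ u| :=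
        norm_sub_le_abs_vf hKc hu0 hu1 hv0 hv1
      rw [e]
      rcases abs_cases (vf γ v - vf γ u) with ⟨he, _⟩ | ⟨he, _⟩ <;> linarith
    -- case GB
    · have e : (α 1 - β 0 + β v) - (α 1 - γ 0 + γ u) = (γ 0 - γ u) + (β v - β 0) := by abel
      have b1 : ‖γ 0 - γ u‖ ≤ vf γ u - vf γ 0 := by
        rw [norm_sub_rev]; exact norm_sub_le_vf hKc (le_refl _) hu0 hu1
      have b2 : ‖β v - β 0‖ ≤ vf β v - vf β 0 := norm_sub_le_vf hKb (le_refl _) hv0 hv1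
      have hzγ : vf γ 0 = 0 := vf_zero
      have hzβ : vf β 0 = 0 := vf_zero
      have hq : m ≤ vf α 1 := by
        have := hmle (1/4) (by linarith) (by linarith)
        rwa [hfun_quarter] at this
      calc ‖(α 1 - β 0 + β v) - (α 1 - γ 0 + γ u)‖ ≤ ‖γ 0 - γ u‖ + ‖β v - β 0‖ := by
            rw [e]; exact norm_add_le _ _
        _ ≤ (vf α 1 + vf γ u) + (vf α 1 + vf β v) - 2*m := by linarith
    -- case BA
    · have e : α v - (α 1 - β 0 + β u) = (α v - α 1) + (β 0 - β u) := by abel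
      have b1 : ‖α v - α 1‖ ≤ vf α 1 - vf α v := by
        rw [norm_sub_rev]; exact norm_sub_le_vf hKa hv0 hv1 (le_refl _)
      have b2 : ‖β 0 - β u‖ ≤ vf β u - vf β 0 := by
        rw [norm_sub_rev]; exact norm_sub_le_vf hKb (le_refl _) hu0 hu1
      have hz : vf β 0 = 0 := vf_zero
      calc ‖α v - (α 1 - β 0 + β u)‖ ≤ ‖α v - α 1‖ + ‖β 0 - β u‖ := by
            rw [e]; exact norm_add_le _ _
        _ ≤ (vf α 1 + vf β u) + vf α v - 2*m := by linarith
    -- case BG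
    · have e : (α 1 - γ 0 + γ v) - (α 1 - β 0 + β u) = (β 0 - β u) + (γ v - γ 0) := by abel
      have b1 : ‖β 0 - β u‖ ≤ vf β u - vf β 0 := by
        rw [norm_sub_rev]; exact norm_sub_le_vf hKb (le_refl _) hu0 hu1
      have b2 : ‖γ v - γ 0‖ ≤ vf γ v - vf γ 0 := norm_sub_le_vf hKc (le_refl _) hv0 hv1
      have hzγ : vf γ 0 = 0 := vf_zero
      have hzβ : vf β 0 = 0 := vf_zero
      have hq : m ≤ vf α 1 := by
        have := hmle (1/4) (by linarith) (by linarith)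
        rwa [hfun_quarter] at this
      calc ‖(α 1 - γ 0 + γ v) - (α 1 - β 0 + β u)‖ ≤ ‖β 0 - β u‖ + ‖γ v - γ 0‖ := by
            rw [e]; exact norm_add_le _ _
        _ ≤ (vf α 1 + vf β u) + (vf α 1 + vf γ v) - 2*m := by linarith
    -- case BB
    · have e : (α 1 - β 0 + β v) - (α 1 - β 0 + β u) = β v - β u := by abel
      have key : ‖β v - β u‖ ≤ |vf β v - vf β u| :=
        norm_sub_le_abs_vf hKb hu0 hu1 hv0 hv1
      rw [e]
      rcases abs_cases (vf β v - vf β u) with ⟨he, _⟩ | ⟨he, _⟩ <;> linarith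
end
end
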